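/- arXiv:math/0505198 — 8 statements merged into one kernel-verified Lean document; each statement's English description precedes it below -/
import Mathlib

section
/- Let G be an abelian group and A a finite subset of G. For every integer s ≥ 2, there exists a finite abelian group G' and a subset A' ⊆ G' such that A is Freiman s-isomorphic to A' (i.e., there is a bijection φ : A → A' such that a₁ + ... + a_s = b₁ + ... + b_s holds for elements of A if and only if φ(a₁) + ... + φ(a_s) = φ(b₁) + ... + φ(b_s)). -/
open Multiset Set
open scoped DirectSum

private lemma multiset_abs_sum_le (C : ℤ) :
    ∀ (m : Multiset ℤ), (∀ x ∈ m, |x| ≤ C) → |m.sum| ≤ (Multiset.card m : ℤ) * C := by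
  intro m
  induction m using Multiset.induction with
  | empty => simp
  | cons a m ih =>
    intro h
    simp only [Multiset.sum_cons, Multiset.card_cons]
    calc |a + m.sum| ≤ |a| + |m.sum| := abs_add_le _ _
      _ ≤ C + (Multiset.card m : ℤ) * C :=
        add_le_add (h a (Multiset.mem_cons_self _ _))
          (ih fun x hx => h x (Multiset.mem_cons_of_mem hx))
      _ = ((Multiset.card m : ℤ) + 1) * C := by ring
      _ = ((Multiset.card m + 1 : ℕ) : ℤ) * C := by push_cast; ring

private lemma isAddFreimanIso_symm_aux {α β : Type*} [AddCommMonoid α] [AddCommMonoid β]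
    {n : ℕ} {A : Set α} {B : Set β} {f : α → β} {g : β → α}
    (hf : IsAddFreimanIso n A B f) (hg : Set.InvOn g f A B) :
    IsAddFreimanIso n B A g where
  bijOn := Set.BijOn.symm hg.symm hf.bijOn
  map_sum_eq_map_sum u v huB hvB hcu hcv := by
    have hgB : Set.MapsTo g B A := (Set.BijOn.symm hg.symm hf.bijOn).mapsTo
    have key := hf.map_sum_eq_map_sum (s := u.map g) (t := v.map g)
      (fun x hx => by
        obtain ⟨y, hy, rfl⟩ := Multiset.mem_map.1 hx; exact hgB (huB hy))
      (fun x hx => by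
        obtain ⟨y, hy, rfl⟩ := Multiset.mem_map.1 hx; exact hgB (hvB hy))
      (by rwa [Multiset.card_map]) (by rwa [Multiset.card_map])
    have hu' : (u.map g).map f = u := by
      rw [Multiset.map_map]
      exact (Multiset.map_congr rfl (fun x hx => hg.2 (huB hx))).trans (Multiset.map_id _)
    have hv' : (v.map g).map f = v := by
      rw [Multiset.map_map]
      exact (Multiset.map_congr rfl (fun x hx => hg.2 (hvB hx))).trans (Multiset.map_id _)
    rw [hu', hv'] at key
    exact key.symm

private lemma isAddFreimanIso_of_hom {α β : Type*} [AddCommGroup α] [AddCommGroup β]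
    (f : α →+ β) (B : Set α) {n : ℕ} (hn : n ≠ 0)
    (h : ∀ u v : Multiset α, (∀ x ∈ u, x ∈ B) → (∀ x ∈ v, x ∈ B) →
      Multiset.card u = n → Multiset.card v = n → f u.sum = f v.sum → u.sum = v.sum) :
    IsAddFreimanIso n B (f '' B) f where
  bijOn := by
    refine ⟨Set.mapsTo_image f B, ?_, Set.surjOn_image f B⟩
    intro x hx y hy hxy
    obtain ⟨m, rfl⟩ := Nat.exists_eq_succ_of_ne_zero hn
    have hu : ∀ z ∈ (x ::ₘ Multiset.replicate m x), z ∈ B := by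
      intro z hz
      rcases Multiset.mem_cons.1 hz with hz | hz
      · exact hz ▸ hx
      · rw [Multiset.eq_of_mem_replicate hz]; exact hx
    have hv : ∀ z ∈ (y ::ₘ Multiset.replicate m x), z ∈ B := by
      intro z hz
      rcases Multiset.mem_cons.1 hz with hz | hz
      · exact hz ▸ hy
      · rw [Multiset.eq_of_mem_replicate hz]; exact hx
    have := h (x ::ₘ Multiset.replicate m x) (y ::ₘ Multiset.replicate m x) hu hv
      (by simp) (by simp) (by simp [Multiset.sum_cons, Multiset.sum_replicate, hxy])
    simpa [Multiset.sum_cons, Multiset.sum_replicate] using this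
  map_sum_eq_map_sum u v huB hvB hcu hcv := by
    rw [← map_multiset_sum, ← map_multiset_sum]
    exact ⟨h u v huB hvB hcu hcv, fun hh => by rw [hh]⟩

/-- **Finite sets have finite models.** Every finite subset `A` of an abelian group is
Freiman `s`-isomorphic to a subset of some finite abelian group, for any `s ≥ 2`. -/
theorem finite_sets_have_finite_models {G : Type*} [AddCommGroup G] (A : Finset G)
    (s : ℕ) (hs : 2 ≤ s) :
    ∃ (G' : Type) (_ : AddCommGroup G') (_ : Fintype G') (A' : Set G') (φ : G → G'),
      IsAddFreimanIso s (A : Set G) A' φ := by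
  classical
  have hs0 : s ≠ 0 := by omega
  set H := AddSubgroup.closure (A : Set G) with hHdef
  haveI : AddGroup.FG ↥H := AddGroup.closure_finset_fg A
  obtain ⟨n, ι, fι, p, hp, e, ⟨eqv⟩⟩ := AddCommGroup.equiv_free_prod_directSum_zmod ↥H
  haveI : ∀ i, NeZero (p i ^ e i) := fun i => ⟨pow_ne_zero _ (hp i).pos.ne'⟩
  haveI : Fintype (⨁ i, ZMod (p i ^ e i)) :=
    Fintype.ofEquiv _ DFinsupp.equivFunOnFintype.symm
  set A₀ : Set ↥H := Subtype.val ⁻¹' (A : Set G) with hA₀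
  -- the finite set of lifts of `A`
  set T : Finset ↥H :=
    A.attach.image (fun a => (⟨a.1, AddSubgroup.subset_closure a.2⟩ : ↥H)) with hT
  have hmemT : ∀ x : ↥H, (x : G) ∈ A → x ∈ T := by
    intro x hx
    simp only [hT, Finset.mem_image, Finset.mem_attach, true_and]
    exact ⟨⟨x, hx⟩, Subtype.ext rfl⟩
  set C : ℕ := T.sup (fun x => (eqv x).1.support.sup fun i => ((eqv x).1 i).natAbs) with hCdef
  have hC : ∀ x : ↥H, (x : G) ∈ A → ∀ i, |(eqv x).1 i| ≤ (C : ℤ) := by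
    intro x hx i
    by_cases hi : i ∈ (eqv x).1.support
    · have h1 : ((eqv x).1 i).natAbs ≤ (eqv x).1.support.sup fun i => ((eqv x).1 i).natAbs :=
        Finset.le_sup (f := fun i => ((eqv x).1 i).natAbs) hi
      have h2 : ((eqv x).1.support.sup fun i => ((eqv x).1 i).natAbs) ≤ C :=
        Finset.le_sup (f := fun x => (eqv x).1.support.sup fun i => ((eqv x).1 i).natAbs)
          (hmemT x hx)
      rw [Int.abs_eq_natAbs]
      exact_mod_cast h1.trans h2
    · rw [Finsupp.notMem_support_iff.1 hi]
      simp
  set N : ℕ := 2 * s * C + 1 with hNdef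
  haveI : NeZero N := ⟨Nat.succ_ne_zero _⟩
  -- the reduction homomorphism
  set ψ : ↥H →+ ((Fin n → ZMod N) × ⨁ i, ZMod (p i ^ e i)) :=
    { toFun := fun x => ((fun i => (((eqv x).1 i : ℤ) : ZMod N)), (eqv x).2)
      map_zero' := by
        rw [_root_.map_zero eqv]
        exact Prod.ext (funext fun i => by simp) (by simp)
      map_add' := by
        intro a b
        rw [_root_.map_add eqv]
        refine Prod.ext (funext fun i => ?_) rfl
        simp } with hψ
  -- key injectivity on sums of `s` elements
  have hkey : ∀ u v : Multiset ↥H, (∀ x ∈ u, x ∈ A₀) → (∀ x ∈ v, x ∈ A₀) →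
      Multiset.card u = s → Multiset.card v = s → ψ u.sum = ψ v.sum → u.sum = v.sum := by
    intro u v huA hvA hcu hcv hsum
    apply eqv.injective
    simp only [hψ, AddMonoidHom.coe_mk, ZeroHom.coe_mk, Prod.ext_iff] at hsum
    refine Prod.ext (Finsupp.ext fun i => ?_) hsum.2
    -- per-coordinate evaluation homomorphism
    set F1i : ↥H →+ ℤ :=
      ((Finsupp.applyAddHom i).comp ((AddMonoidHom.fst _ _).comp eqv.toAddMonoidHom)) with hF1i
    have habs : ∀ (m : Multiset ↥H), (∀ x ∈ m, x ∈ A₀) → Multiset.card m = s →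
        |F1i m.sum| ≤ (s : ℤ) * C := by
      intro m hm hcm
      have : F1i m.sum = ((m.map F1i).sum) := map_multiset_sum _ _
      rw [this]
      have := multiset_abs_sum_le (C : ℤ) (m.map F1i) (by
        intro x hx
        obtain ⟨y, hy, rfl⟩ := Multiset.mem_map.1 hx
        exact hC y (hm y hy) i)
      rwa [Multiset.card_map, hcm] at this
    have hcast : ((F1i u.sum : ℤ) : ZMod N) = ((F1i v.sum : ℤ) : ZMod N) := by
      have := congrFun hsum.1 i
      simpa [hF1i] using this
    have hdvd : (N : ℤ) ∣ F1i v.sum - F1i u.sum :=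
      ((ZMod.intCast_eq_intCast_iff _ _ _).1 hcast).dvd
    have hlt : |F1i v.sum - F1i u.sum| < (N : ℤ) := by
      have h1 := habs u huA hcu
      have h2 := habs v hvA hcv
      have : |F1i v.sum - F1i u.sum| ≤ |F1i v.sum| + |F1i u.sum| := abs_sub _ _
      have hN : ((2 * s * C : ℕ) : ℤ) < (N : ℤ) := by exact_mod_cast Nat.lt_succ_self _
      push_cast at hN ⊢
      linarith [h1, h2, this]
    have h0 : F1i u.sum = F1i v.sum := by
      have := Int.eq_zero_of_abs_lt_dvd hdvd hlt
      omega
    simpa [hF1i] using h0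
  have h1 : IsAddFreimanIso s A₀ (↑ψ '' A₀) ψ := isAddFreimanIso_of_hom ψ A₀ hs0 hkey
  -- the inclusion ↥H → G restricted to A₀ is a Freiman iso onto A
  have hkey2 : ∀ u v : Multiset ↥H, (∀ x ∈ u, x ∈ A₀) → (∀ x ∈ v, x ∈ A₀) →
      Multiset.card u = s → Multiset.card v = s →
      H.subtype u.sum = H.subtype v.sum → u.sum = v.sum :=
    fun u v _ _ _ _ h => Subtype.ext h
  have h2 : IsAddFreimanIso s A₀ (↑H.subtype '' A₀) H.subtype :=
    isAddFreimanIso_of_hom H.subtype A₀ hs0 hkey2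
  have himg : (↑H.subtype '' A₀) = (A : Set G) := by
    ext x
    constructor
    · rintro ⟨y, hy, rfl⟩; exact hy
    · intro hx
      exact ⟨⟨x, AddSubgroup.subset_closure hx⟩, hx, rfl⟩
  rw [himg] at h2
  set g : G → ↥H := fun x => if h : x ∈ H then ⟨x, h⟩ else 0 with hg
  have hinv : Set.InvOn g H.subtype A₀ (A : Set G) := by
    constructor
    · intro x _
      simp only [hg, AddSubgroup.coe_subtype, SetLike.coe_mem, dif_pos]
    · intro x hx
      have hxH : x ∈ H := AddSubgroup.subset_closure hx
      simp only [hg, hxH, dif_pos, AddSubgroup.coe_subtype]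
  have h3 : IsAddFreimanIso s (A : Set G) A₀ g := isAddFreimanIso_symm_aux h2 hinv
  exact ⟨(Fin n → ZMod N) × ⨁ i, ZMod (p i ^ e i), inferInstance, inferInstance,
    ↑ψ '' A₀, ψ ∘ g, h1.comp h3⟩
end

section
/- Let G be an abelian group, A ⊆ G a finite set, q ≥ 2 an integer, and ψ : G → ℤ/qℤ a group homomorphism. Suppose there exist b ∈ ℤ/qℤ and an integer l with l < q/3 such that the number of elements of A - A not lying in ψ⁻¹ of the interval [b, b+l] is strictly less than |A|/2. Then there exists x ∈ ℤ/qℤ such that ψ(A) ⊆ [x, x+l]. -/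
open scoped Pointwise

open Classical in
/-- If few elements of `A - A` fall outside `ψ⁻¹[b, b+l]` (fewer than `|A|/2`),
with `l < q/3`, then `ψ(A)` is contained in an interval `[x, x+l]` of `ℤ/qℤ`. -/
theorem stmt1 {G : Type*} [AddCommGroup G] [DecidableEq G] (A : Finset G)
    (q : ℕ) (hq : 2 ≤ q) (ψ : G →+ ZMod q) (b : ZMod q) (l : ℕ) (hl : 3 * l < q)
    (h : 2 * ((A - A).filter
        (fun d => ∀ i ∈ Finset.range (l + 1), ψ d ≠ b + (i : ZMod q))).card < A.card) :
    ∃ x : ZMod q, ∀ a ∈ A, ∃ i ∈ Finset.range (l + 1), ψ a = x + (i : ZMod q) := by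
  classical
  haveI : NeZero q := ⟨by omega⟩
  have hA : A.Nonempty := Finset.card_pos.mp (by omega)
  obtain ⟨a0, ha0⟩ := hA
  set Bad := (A - A).filter
      (fun d => ∀ i ∈ Finset.range (l + 1), ψ d ≠ b + (i : ZMod q)) with hBadDef
  -- Key counting lemma: any ordered pair is connected through an intermediate element.
  have mid : ∀ a ∈ A, ∀ a' ∈ A, ∃ w ∈ A,
      (∃ i ≤ l, ψ a - ψ w = b + (i : ZMod q)) ∧
      (∃ j ≤ l, ψ w - ψ a' = b + (j : ZMod q)) := by
    intro a ha a' ha'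
    set S1 := A.filter (fun w => a - w ∈ Bad) with hS1
    set S2 := A.filter (fun w => w - a' ∈ Bad) with hS2
    have h1 : S1.card ≤ Bad.card := by
      apply Finset.card_le_card_of_injOn (fun w => a - w)
      · intro w hw; exact (Finset.mem_filter.mp hw).2
      · intro x _ y _ hxy; exact sub_right_injective hxy
    have h2 : S2.card ≤ Bad.card := by
      apply Finset.card_le_card_of_injOn (fun w => w - a')
      · intro w hw; exact (Finset.mem_filter.mp hw).2
      · intro x _ y _ hxy; exact sub_left_injective hxy
    have hsub : ¬ (A ⊆ S1 ∪ S2) := by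
      intro hs
      have hc1 := Finset.card_le_card hs
      have hc2 := Finset.card_union_le S1 S2
      omega
    obtain ⟨w, hwA, hw⟩ := Finset.not_subset.mp hsub
    rw [Finset.mem_union] at hw
    push_neg at hw
    have hw1 : a - w ∉ Bad := fun hc => hw.1 (Finset.mem_filter.mpr ⟨hwA, hc⟩)
    have hw2 : w - a' ∉ Bad := fun hc => hw.2 (Finset.mem_filter.mpr ⟨hwA, hc⟩)
    have hm1 : a - w ∈ A - A := Finset.sub_mem_sub ha hwA
    have hm2 : w - a' ∈ A - A := Finset.sub_mem_sub hwA ha'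
    have hp1 : ¬ (∀ i ∈ Finset.range (l + 1), ψ (a - w) ≠ b + (i : ZMod q)) :=
      fun hp => hw1 (by simp only [hBadDef, Finset.mem_filter]; exact ⟨hm1, hp⟩)
    have hp2 : ¬ (∀ i ∈ Finset.range (l + 1), ψ (w - a') ≠ b + (i : ZMod q)) :=
      fun hp => hw2 (by simp only [hBadDef, Finset.mem_filter]; exact ⟨hm2, hp⟩)
    push_neg at hp1 hp2
    obtain ⟨i, hi, hψi⟩ := hp1
    obtain ⟨j, hj, hψj⟩ := hp2
    rw [Finset.mem_range] at hi hj
    rw [map_sub] at hψi hψj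
    exact ⟨w, hwA, ⟨i, by omega, hψi⟩, ⟨j, by omega, hψj⟩⟩
  -- the integer lift
  set e := (-b).val with he_def
  have he : e < q := ZMod.val_lt _
  have hbe : (e : ZMod q) = -b := ZMod.natCast_rightInverse (-b)
  set F : G → ℕ := fun a => (ψ a - ψ a0 - (b + b)).val with hFdef
  have hFval : ∀ a : G, ((F a : ℕ) : ZMod q) = ψ a - ψ a0 - (b + b) :=
    fun a => ZMod.natCast_rightInverse _
  have hF2l : ∀ a ∈ A, F a ≤ 2 * l := by
    intro a ha
    obtain ⟨w, hwA, ⟨i, hi, hψ1⟩, ⟨j, hj, hψ2⟩⟩ := mid a ha a0 ha0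
    have hsum : ψ a - ψ a0 - (b + b) = ((i + j : ℕ) : ZMod q) := by
      push_cast
      linear_combination hψ1 + hψ2
    have : F a = i + j := by
      rw [hFdef]
      simp only
      rw [hsum, ZMod.val_cast_of_lt (by omega : i + j < q)]
    omega
  -- step lemma
  have step : ∀ a ∈ A, ∀ w ∈ A, ∀ i : ℕ, i ≤ l → ψ a - ψ w = b + (i : ZMod q) →
      ((F a : ℤ) - F w = (i : ℤ) - e ∨ (F a : ℤ) - F w = (i : ℤ) - e + q) := by
    intro a ha w hw i hi hψ
    have hcong : (((F a : ℤ) - F w - i + e : ℤ) : ZMod q) = 0 := by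
      push_cast
      rw [hFval a, hFval w, hbe, ]
      linear_combination hψ
    have hdvd : (q : ℤ) ∣ ((F a : ℤ) - F w - i + e) :=
      (ZMod.intCast_zmod_eq_zero_iff_dvd _ q).mp hcong
    obtain ⟨k, hk⟩ := hdvd
    have hFa := hF2l a ha
    have hFw := hF2l w hw
    have hq0 : (0 : ℤ) < q := by exact_mod_cast (by omega : 0 < q)
    have hk01 : k = 0 ∨ k = 1 := by
      rcases lt_trichotomy k 0 with hlt | heq | hgt
      · exfalso
        have hk1 : k ≤ -1 := by omega
        have : (q : ℤ) * k ≤ (q : ℤ) * (-1) :=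
          mul_le_mul_of_nonneg_left hk1 hq0.le
        have hD : (F a : ℤ) - F w - i + e ≤ -q := by
          rw [hk]; linarith
        omega
      · exact Or.inl heq
      · rcases (by omega : k = 1 ∨ 2 ≤ k) with h1 | h2
        · exact Or.inr h1
        · exfalso
          have : (q : ℤ) * 2 ≤ (q : ℤ) * k :=
            mul_le_mul_of_nonneg_left h2 hq0.le
          have hD : 2 * (q : ℤ) ≤ (F a : ℤ) - F w - i + e := by
            rw [hk]; linarith
          omega
    rcases hk01 with rfl | rfl
    · left; omega
    · right; omega
  -- extremal elements
  obtain ⟨aM, haM, hMax⟩ := A.exists_max_image F ⟨a0, ha0⟩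
  obtain ⟨am, ham, hMin⟩ := A.exists_min_image F ⟨a0, ha0⟩
  by_cases hcase : F aM ≤ F am + l
  · -- ψ(A) fits in the interval of length l starting at ψ a0 + 2b + F am
    refine ⟨ψ a0 + (b + b) + ((F am : ℕ) : ZMod q), ?_⟩
    intro a ha
    have hma : F am ≤ F a := hMin a ha
    have haM' : F a ≤ F aM := hMax a ha
    refine ⟨F a - F am, Finset.mem_range.mpr (by omega), ?_⟩
    have h1 : (((F a - F am : ℕ)) : ZMod q) = ((F a : ℕ) : ZMod q) - ((F am : ℕ) : ZMod q) := by
      rw [Nat.cast_sub hma]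
    rw [h1, hFval a, hFval am]
    ring
  · exfalso
    obtain ⟨w, hwA, ⟨i1, hi1, hψ1⟩, ⟨i2, hi2, hψ2⟩⟩ := mid aM haM am ham
    obtain ⟨v, hvA, ⟨i3, hi3, hψ3⟩, ⟨i4, hi4, hψ4⟩⟩ := mid am ham aM haM
    have s1 := step aM haM w hwA i1 hi1 hψ1
    have s2 := step w hwA am ham i2 hi2 hψ2
    have s3 := step am ham v hvA i3 hi3 hψ3
    have s4 := step v hvA aM haM i4 hi4 hψ4
    have hw1 := hMax w hwA
    have hw2 := hMin w hwA
    have hv1 := hMax v hvA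
    have hv2 := hMin v hvA
    have hM := hF2l aM haM
    omega
end

section
/- Let G be a finite abelian group, S ⊆ G, and let κ ∈ (0,1) and δ ∈ (0,1/2). Suppose γ is a nontrivial character of G of order q such that |Ŝ(γ)| ≥ (1 - 4κδ²)·|S|/|G|, where Ŝ(γ) = |G|⁻¹ Σ_{x∈G} 1_S(x)γ(x). Let ψ : G → ℤ/qℤ be the homomorphism obtained by composing γ with the map sending e^{2πij/q} to j mod q. Then there exist b ∈ ℤ/qℤ and an integer l with l < δq such that the number of elements of S whose image under ψ lies outside the interval [b, b+l] is at most κ|S|. -/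
open Real

lemma aux_sin_lb {y : ℝ} (h0 : 0 ≤ y) (h1 : y ≤ π / 4) :
    2 * Real.sqrt 2 / π * y ≤ Real.sin y := by
  have hπ := Real.pi_pos
  have hb0 : 0 ≤ 4 * y / π := by positivity
  have hb1 : 4 * y / π ≤ 1 := by
    rw [div_le_one hπ]; linarith
  have hmem0 : (0:ℝ) ∈ Set.Icc (0:ℝ) π := by constructor <;> linarith
  have hmem1 : (π/4 : ℝ) ∈ Set.Icc (0:ℝ) π := by constructor <;> linarith
  have := strictConcaveOn_sin_Icc.concaveOn.2 hmem0 hmem1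
    (by linarith : (0:ℝ) ≤ 1 - 4*y/π) hb0 (by ring)
  simp only [smul_eq_mul, Real.sin_zero, mul_zero, zero_add] at this
  have hy : 4*y/π * (π/4) = y := by field_simp
  rw [hy, Real.sin_pi_div_four] at this
  calc 2 * Real.sqrt 2 / π * y = 4*y/π * (Real.sqrt 2 / 2) := by ring
    _ ≤ Real.sin y := this

lemma aux_close {δ t : ℝ} (hδ0 : 0 < δ) (hδ1 : δ < 1/2)
    (h : 1 - 4*δ^2 < Real.cos (2*π*t)) : ∃ k : ℤ, |t - (k:ℝ)| < δ/2 := by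
  have hπ := Real.pi_pos
  refine ⟨round t, ?_⟩
  by_contra hcon
  push_neg at hcon
  set s := |t - (round t : ℝ)| with hs
  have hs0 : 0 ≤ s := abs_nonneg _
  have hs2 : s ≤ 1/2 := abs_sub_round t  -- check name
  have hcos : Real.cos (2*π*t) = Real.cos (2*π*s) := by
    have h1 : 2*π*t = 2*π*(t - (round t:ℝ)) + (round t : ℤ) * (2*π) := by push_cast [Int.cast_natCast]; ring
    rw [h1, Real.cos_add_int_mul_two_pi]
    rw [hs, ← Real.cos_abs (2*π*(t - (round t:ℝ))), abs_mul, abs_of_nonneg (by positivity : (0:ℝ) ≤ 2*π)]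
  have hid : Real.cos (2*π*s) = 1 - 2 * Real.sin (π*s)^2 := by
    have := Real.cos_two_mul' (x := π*s)
    have h2 : 2*π*s = 2*(π*s) := by ring
    rw [h2, this, ← Real.sin_sq_add_cos_sq (π*s)]; ring
  -- sin (π*s) ≥ sin (π*δ/2) ≥ √2 δ
  have hmono : Real.sin (π*(δ/2)) ≤ Real.sin (π*s) := by
    apply Real.strictMonoOn_sin.monotoneOn
    · constructor <;> nlinarith
    · constructor <;> nlinarith
    · nlinarith
  have hlb : Real.sqrt 2 * δ ≤ Real.sin (π*(δ/2)) := by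
    have := aux_sin_lb (y := π*(δ/2)) (by positivity) (by nlinarith)
    calc Real.sqrt 2 * δ = 2 * Real.sqrt 2 / π * (π*(δ/2)) := by field_simp
      _ ≤ _ := this
  have hsqrt2 : Real.sqrt 2 ^ 2 = 2 := Real.sq_sqrt (by norm_num)
  have hsd : 0 ≤ Real.sqrt 2 * δ := by positivity
  have : Real.sin (π*s)^2 ≥ 2 * δ^2 := by nlinarith [hmono, hlb]
  rw [hcos, hid] at h
  nlinarith

set_option maxHeartbeats 1000000 in
open Classical in
/-- If a nontrivial character `γ` of order `q` gives `|Ŝ(γ)| ≥ (1 - 4κδ²)|S|/|G|`, then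
most of `S` (all but at most `κ|S|` elements) maps under the induced homomorphism
`ψ : G → ℤ/qℤ` into an interval `[b, b+l]` with `l < δq`. -/
theorem stmt2 {G : Type*} [AddCommGroup G] [Fintype G] (S : Finset G)
    (κ δ : ℝ) (hκ0 : 0 < κ) (hκ1 : κ < 1) (hδ0 : 0 < δ) (hδ1 : δ < 1 / 2)
    (γ : AddChar G ℂ) (hγ : γ ≠ 1) (q : ℕ) (hq : orderOf γ = q)
    (ψ : G →+ ZMod q)
    (hψ : ∀ x : G, γ x = Complex.exp (2 * Real.pi * Complex.I * ((ψ x).val : ℂ) / (q : ℂ)))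
    (hhat : (1 - 4 * κ * δ ^ 2) * ((S.card : ℝ) / Fintype.card G) ≤
      ‖(Fintype.card G : ℂ)⁻¹ * ∑ x ∈ S, γ x‖) :
    ∃ (b : ZMod q) (l : ℕ), (l : ℝ) < δ * q ∧
      ((S.filter
        (fun s => ∀ i ∈ Finset.range (l + 1), ψ s ≠ b + (i : ZMod q))).card : ℝ) ≤
        κ * S.card := by
  classical
  have hπ := Real.pi_pos
  -- q positive
  have hfin : IsOfFinOrder γ := by
    refine isOfFinOrder_iff_pow_eq_one.2 ⟨Fintype.card G, Fintype.card_pos, ?_⟩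
    ext a
    simp [AddChar.pow_apply, ← AddChar.map_nsmul_eq_pow, card_nsmul_eq_zero]
  have hq0 : 0 < q := hq ▸ hfin.orderOf_pos
  haveI : NeZero q := ⟨hq0.ne'⟩
  have hN : 0 < Fintype.card G := Fintype.card_pos
  set n := S.card with hn
  set z := ∑ x ∈ S, γ x with hz
  -- (1-ε) n ≤ |z|
  have habs : (1 - 4*κ*δ^2) * n ≤ ‖z‖ := by
    have h1 : ‖(Fintype.card G : ℂ)⁻¹ * z‖
        = (Fintype.card G : ℝ)⁻¹ * ‖z‖ := by
      rw [norm_mul, norm_inv, Complex.norm_natCast]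
    rw [h1] at hhat
    have hNp : (0:ℝ) < (Fintype.card G : ℝ) := by exact_mod_cast hN
    have := mul_le_mul_of_nonneg_left hhat hNp.le
    calc (1 - 4*κ*δ^2) * n = (Fintype.card G : ℝ) * ((1 - 4*κ*δ^2) * ((n:ℝ) / (Fintype.card G:ℝ))) := by
          field_simp
      _ ≤ (Fintype.card G : ℝ) * ((Fintype.card G : ℝ)⁻¹ * ‖z‖) := this
      _ = ‖z‖ := by field_simp
  have hqR : (0:ℝ) < q := by exact_mod_cast hq0
  rcases Nat.eq_zero_or_pos n with hn0 | hn0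
  · refine ⟨0, 0, by push_cast; positivity, ?_⟩
    have hSe : S = ∅ := Finset.card_eq_zero.1 hn0
    simp [hSe, hn0]
  -- main case
  have hnR : (0:ℝ) < n := by exact_mod_cast hn0
  have hε : 4*κ*δ^2 < 1 := by nlinarith
  set φ := z.arg with hφ
  set f : G → ℝ := fun x => Real.cos (2*Real.pi*(((ψ x).val : ℝ) / q) - φ) with hf
  -- sum of cosines equals |z|
  have hsum : ∑ x ∈ S, f x = ‖z‖ := by
    have hzz : z * Complex.exp (-(φ:ℂ) * Complex.I) = ((‖z‖ : ℝ) : ℂ) := by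
      conv_lhs => rw [← Complex.norm_mul_exp_arg_mul_I z]
      rw [mul_assoc, ← Complex.exp_add]
      have h0 : (z.arg : ℂ) * Complex.I + -(φ:ℂ) * Complex.I = 0 := by rw [hφ]; ring
      rw [h0, Complex.exp_zero, mul_one]
    have hterm : ∀ x ∈ S, (γ x * Complex.exp (-(φ:ℂ) * Complex.I)).re = f x := by
      intro x _
      rw [hψ x]
      have : Complex.exp (2 * Real.pi * Complex.I * ((ψ x).val : ℂ) / (q : ℂ)) *
          Complex.exp (-(φ:ℂ) * Complex.I)
          = Complex.exp (((2*Real.pi*(((ψ x).val : ℝ) / q) - φ : ℝ) : ℂ) * Complex.I) := by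
        rw [← Complex.exp_add]
        congr 1
        have hqc : (q:ℂ) ≠ 0 := by exact_mod_cast hq0.ne'
        have hcast : ((ψ x).val : ℂ) = (((ψ x).val : ℝ) : ℂ) := by norm_cast
        rw [hcast]
        push_cast
        field_simp
        ring
      rw [this, Complex.exp_ofReal_mul_I_re]
    calc ∑ x ∈ S, f x = ∑ x ∈ S, (γ x * Complex.exp (-(φ:ℂ) * Complex.I)).re := by
          exact (Finset.sum_congr rfl hterm).symm
      _ = ((∑ x ∈ S, γ x * Complex.exp (-(φ:ℂ) * Complex.I))).re := by
          rw [Complex.re_sum]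
      _ = (z * Complex.exp (-(φ:ℂ) * Complex.I)).re := by rw [← Finset.sum_mul]
      _ = ‖z‖ := by rw [hzz]; simp
  -- bad set
  set B := S.filter (fun x => f x ≤ 1 - 4*δ^2) with hB
  have hBcard : (B.card : ℝ) ≤ κ * n := by
    have hterm_le : ∀ x ∈ S, 0 ≤ 1 - f x := by
      intro x _
      have hfx : f x ≤ 1 := Real.cos_le_one _
      linarith
    have hSsum : ∑ x ∈ S, (1 - f x) ≤ 4*κ*δ^2 * n := by
      have h1 : ∑ x ∈ S, ((1:ℝ) - f x) = (n:ℝ) - ∑ x ∈ S, f x := by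
        rw [Finset.sum_sub_distrib]
        simp [hn]
      rw [h1, hsum]
      nlinarith [habs]
    have hBsum : ∑ x ∈ B, (1 - f x) ≤ ∑ x ∈ S, (1 - f x) :=
      Finset.sum_le_sum_of_subset_of_nonneg (Finset.filter_subset _ _)
        (fun x hx _ => hterm_le x hx)
    have hBlb : (B.card : ℝ) * (4*δ^2) ≤ ∑ x ∈ B, (1 - f x) := by
      have := Finset.card_nsmul_le_sum B (fun x => 1 - f x) (4*δ^2)
        (fun x hx => by
          have hxx := (Finset.mem_filter.1 hx).2
          show 4*δ^2 ≤ 1 - f x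
          linarith)
      simpa [nsmul_eq_mul] using this
    have h4 : (0:ℝ) < 4*δ^2 := by positivity
    nlinarith
  -- interval data
  set α := φ / (2*Real.pi) with hα
  set X := (q:ℝ) * α with hX
  set d := (q:ℝ) * δ / 2 with hd
  set B0 : ℤ := ⌊X - d⌋ + 1 with hB0
  set B1 : ℤ := ⌈X + d⌉ - 1 with hB1
  set l : ℕ := (B1 - B0).toNat with hl
  clear_value B0 B1 l
  have hqR : (0:ℝ) < q := by exact_mod_cast hq0
  have hlδ : (l:ℝ) < δ * q := by
    rcases le_or_gt (B1 - B0) 0 with h | h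
    · have : l = 0 := by simp [hl, Int.toNat_of_nonpos h]
      rw [this]; push_cast; positivity
    · have h2 : ((B1 - B0).toNat : ℤ) = B1 - B0 := Int.toNat_of_nonneg h.le
      have : (l:ℝ) = ((B1 - B0 : ℤ) : ℝ) := by rw [hl]; exact_mod_cast h2
      rw [this]
      have h1 : ((⌈X + d⌉ : ℤ) : ℝ) < X + d + 1 := Int.ceil_lt_add_one _
      have h2 : X - d - 1 < ((⌊X - d⌋ : ℤ) : ℝ) := Int.sub_one_lt_floor _
      push_cast [hB0, hB1]
      push_cast [hB0, hB1] at h1 h2 ⊢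
      have hdd : d = (q:ℝ)*δ/2 := hd
      nlinarith
  refine ⟨(B0 : ZMod q), l, hlδ, ?_⟩
  -- filter ⊆ B
  have hsub : S.filter (fun s => ∀ i ∈ Finset.range (l + 1), ψ s ≠ (B0 : ZMod q) + (i : ZMod q)) ⊆ B := by
    intro s hs
    simp only [Finset.mem_filter] at hs
    obtain ⟨hsS, hnot⟩ := hs
    rw [hB, Finset.mem_filter]
    refine ⟨hsS, ?_⟩
    by_contra hcon
    push_neg at hcon
    -- f s > 1 - 4δ², derive interval membership
    set j := (ψ s).val with hj
    have hjψ : ψ s = ((j : ℕ) : ZMod q) := by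
      rw [hj, ZMod.natCast_val, ZMod.cast_id]
    have hcos : 1 - 4*δ^2 < Real.cos (2*Real.pi*(((j:ℝ)/q) - α)) := by
      have : 2*Real.pi*(((j:ℝ)/q) - α) = 2*Real.pi*((j:ℝ)/q) - φ := by
        rw [hα]; field_simp
      rw [this]; exact hcon
    obtain ⟨k, hk⟩ := aux_close hδ0 hδ1 hcos
    clear_value j
    set m : ℤ := (j:ℤ) - k * q with hm
    clear_value m
    have hmX : |(m:ℝ) - X| < d := by
      have h1 : (m:ℝ) - X = (q:ℝ) * (((j:ℝ)/q) - α - k) := by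
        rw [hm, hX]; push_cast; field_simp; ring
      rw [h1, abs_mul, abs_of_nonneg hqR.le]
      calc (q:ℝ) * |((j:ℝ)/q) - α - k| < (q:ℝ) * (δ/2) := by
            exact mul_lt_mul_of_pos_left hk hqR
        _ = d := by rw [hd]; ring
    have hmlb : B0 ≤ m := by
      rw [hB0, Int.add_one_le_iff, Int.floor_lt]
      have := abs_lt.1 hmX
      linarith [this.1]
    have hmub : m ≤ B1 := by
      rw [hB1, Int.le_sub_one_iff, Int.lt_ceil]
      have := abs_lt.1 hmX
      linarith [this.2]
    set i : ℕ := (m - B0).toNat with hi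
    clear_value i
    have hile : i ≤ l := by
      rw [hi, hl]
      exact Int.toNat_le_toNat (by omega)
    have hψs : ψ s = (B0 : ZMod q) + (i : ZMod q) := by
      have h1 : ψ s = ((j : ℕ) : ZMod q) := hjψ
      have h2 : ((m : ℤ) : ZMod q) = ((j : ℕ) : ZMod q) := by
        rw [hm]; push_cast; simp [ZMod.natCast_self]
      have h3 : ((i : ℕ) : ZMod q) = ((m - B0 : ℤ) : ZMod q) := by
        rw [hi]; exact_mod_cast congrArg (Int.cast : ℤ → ZMod q) (Int.toNat_of_nonneg (by omega))
      rw [h1, ← h2, h3]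
      push_cast
      ring
    exact hnot i (Finset.mem_range.2 (Nat.lt_succ_of_le hile)) hψs
  calc _ ≤ (B.card : ℝ) := by exact Nat.cast_le.mpr (by convert Finset.card_le_card hsub)
    _ ≤ κ * n := hBcard
end

section
/- Let G be a finite abelian group, Φ = {φ₁, ..., φ_d} a dissociated set of characters of G, and f(x) = Σ_{j=1}^d c_j Re(ω_j φ_j(x)) with c_j ∈ ℝ and |ω_j| = 1. Then for every real t, 𝔼_{x∈G} e^{t f(x)} ≤ e^{t² 𝔼 f²}, where 𝔼 f² = 𝔼_{x∈G} f(x)². -/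
lemma aux_re_sq (z : ℂ) : z.re ^ 2 = ((z ^ 2).re + ‖z‖ ^ 2) / 2 := by
  rw [Complex.sq_norm, Complex.normSq_apply, sq z, Complex.mul_re]; ring

lemma aux_convex (v m y : ℝ) (hm : 0 < m) (hy : y ^ 2 ≤ m ^ 2) :
    Real.exp (v * y) ≤ Real.cosh (v * m) + y * (Real.sinh (v * m) / m) := by
  have hy1 : -m ≤ y := by nlinarith
  have hy2 : y ≤ m := by nlinarith
  have h1 : (0:ℝ) ≤ (m - y)/(2*m) := by apply div_nonneg <;> linarith
  have h2 : (0:ℝ) ≤ (m + y)/(2*m) := by apply div_nonneg <;> linarith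
  have h3 : (m - y)/(2*m) + (m + y)/(2*m) = 1 := by field_simp; ring
  have hle := convexOn_exp.2 (Set.mem_univ (-(v*m))) (Set.mem_univ (v*m)) h1 h2 h3
  simp only [smul_eq_mul] at hle
  have he : (m - y)/(2*m) * (-(v*m)) + (m + y)/(2*m) * (v*m) = v * y := by
    field_simp; ring
  rw [he] at hle
  rw [Real.cosh_eq, Real.sinh_eq]
  calc Real.exp (v*y) ≤ (m - y)/(2*m) * Real.exp (-(v*m)) + (m + y)/(2*m) * Real.exp (v*m) := hle
    _ = (Real.exp (v*m) + Real.exp (-(v*m)))/2 + y * ((Real.exp (v*m) - Real.exp (-(v*m)))/2 / m) := by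
        field_simp; ring

lemma aux_prod_apply {G : Type*} [AddCommGroup G] {ι : Type*} (s : Finset ι)
    (ψ : ι → AddChar G ℂ) (x : G) : (∏ i ∈ s, ψ i) x = ∏ i ∈ s, ψ i x := by
  rw [AddChar.prod_eq_sum, AddChar.sum_apply]

lemma aux_key {G : Type*} [AddCommGroup G] [Fintype G] {d : ℕ}
    (φ : Fin d → AddChar G ℂ)
    (hdiss : ∀ ε : Fin d → ℤ, (∀ j, ε j = -1 ∨ ε j = 0 ∨ ε j = 1) →
      (∏ j, φ j ^ ε j) = 1 → ∀ j, ε j = 0)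
    (ω : Fin d → ℂ) (hω : ∀ j, ‖ω j‖ = 1)
    (T : Finset (Fin d)) (hT : T.Nonempty) :
    ∑ x : G, ∏ j ∈ T, ((ω j * φ j x).re : ℝ) = 0 := by
  classical
  have hφnorm : ∀ j x, ‖φ j x‖ = 1 := fun j x => by
    exact AddChar.norm_apply (φ j) x
  have hre : ∀ j x, (((ω j * φ j x).re : ℝ) : ℂ)
      = (ω j / 2) * φ j x + ((ω j)⁻¹ / 2) * (φ j)⁻¹ x := by
    intro j x
    have habs : ‖ω j * φ j x‖ = 1 := by
      rw [norm_mul, hω, hφnorm, mul_one]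
    have hc : (starRingEnd ℂ) (ω j * φ j x) = (ω j)⁻¹ * (φ j)⁻¹ x := by
      rw [← Complex.inv_eq_conj habs, mul_inv, AddChar.inv_apply']
    have h2 := Complex.add_conj (ω j * φ j x)
    rw [hc] at h2
    push_cast at h2
    linear_combination (-1/2 : ℂ) * h2
  -- main computation in ℂ
  have hC : ∑ x : G, ∏ j ∈ T, (((ω j * φ j x).re : ℝ) : ℂ) = 0 := by
    have : ∀ x : G, ∏ j ∈ T, (((ω j * φ j x).re : ℝ) : ℂ)
        = ∑ S ∈ T.powerset, (∏ j ∈ S, (ω j / 2) * φ j x) *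
            ∏ j ∈ T \ S, ((ω j)⁻¹ / 2) * (φ j)⁻¹ x := by
      intro x
      rw [← Finset.prod_add]
      exact Finset.prod_congr rfl fun j _ => hre j x
    simp only [this]
    rw [Finset.sum_comm]
    refine Finset.sum_eq_zero fun S hS => ?_
    have hST : S ⊆ T := Finset.mem_powerset.1 hS
    -- define the exponent vector
    set ε : Fin d → ℤ := fun j => if j ∈ S then 1 else if j ∈ T then -1 else 0 with hε
    set ψ : AddChar G ℂ := (∏ j ∈ T \ S, (φ j)⁻¹) * ∏ j ∈ S, φ j with hψ
    have hψeq : (∏ j : Fin d, φ j ^ ε j) = ψ := by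
      rw [← Finset.prod_subset (Finset.subset_univ T)
        (fun j _ hj => by
          have h1 : j ∉ S := fun h => hj (hST h)
          simp [hε, h1, hj])]
      rw [← Finset.prod_sdiff hST, hψ]
      congr 1
      · exact Finset.prod_congr rfl fun j hj => by
          have := Finset.mem_sdiff.1 hj
          simp [hε, this.2, this.1, zpow_neg_one]
      · exact Finset.prod_congr rfl fun j hj => by simp [hε, hj]
    have hψne : ψ ≠ 1 := by
      intro h
      obtain ⟨j₀, hj₀⟩ := hT
      have h0 := hdiss ε (fun j => by by_cases h1 : j ∈ S <;> by_cases h2 : j ∈ T <;> simp [hε, h1, h2]) (hψeq.trans h) j₀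
      by_cases h1 : j₀ ∈ S <;> simp [hε, h1, hj₀] at h0
    have hsum0 : ∑ x : G, ψ x = 0 :=
      AddChar.sum_eq_zero_iff_ne_zero.2 (by rwa [← AddChar.one_eq_zero])
    calc ∑ x : G, (∏ j ∈ S, (ω j / 2) * φ j x) * ∏ j ∈ T \ S, ((ω j)⁻¹ / 2) * (φ j)⁻¹ x
        = ((∏ j ∈ S, (ω j / 2)) * ∏ j ∈ T \ S, ((ω j)⁻¹ / 2)) * ∑ x : G, ψ x := by
          rw [Finset.mul_sum]
          refine Finset.sum_congr rfl fun x _ => ?_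
          rw [hψ, AddChar.mul_apply, aux_prod_apply, aux_prod_apply,
            Finset.prod_mul_distrib, Finset.prod_mul_distrib]
          ring
      _ = 0 := by rw [hsum0, mul_zero]
  rw [← Complex.ofReal_eq_zero]
  push_cast
  exact hC

/-- Bernstein-type inequality: for a dissociated family of characters and
`f(x) = ∑ c_j Re(ω_j φ_j(x))`, one has `𝔼 e^{tf} ≤ e^{t² 𝔼 f²}` for all real `t`. -/
theorem stmt4 {G : Type*} [AddCommGroup G] [Fintype G] (d : ℕ)
    (φ : Fin d → AddChar G ℂ)
    (hdiss : ∀ ε : Fin d → ℤ, (∀ j, ε j = -1 ∨ ε j = 0 ∨ ε j = 1) →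
      (∏ j, φ j ^ ε j) = 1 → ∀ j, ε j = 0)
    (c : Fin d → ℝ) (ω : Fin d → ℂ) (hω : ∀ j, ‖ω j‖ = 1)
    (f : G → ℝ) (hf : ∀ x, f x = ∑ j, c j * (ω j * φ j x).re) (t : ℝ) :
    (Fintype.card G : ℝ)⁻¹ * ∑ x : G, Real.exp (t * f x) ≤
      Real.exp (t ^ 2 * ((Fintype.card G : ℝ)⁻¹ * ∑ x : G, f x ^ 2)) := by
  classical
  have : Nonempty G := ⟨0⟩
  have hG : (0:ℝ) < (Fintype.card G : ℝ) := by exact_mod_cast Fintype.card_pos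
  set N : ℝ := (Fintype.card G : ℝ) with hN
  set a : Fin d → G → ℝ := fun j x => (ω j * φ j x).re with ha
  set E : Fin d → ℝ := fun j => N⁻¹ * ∑ y : G, a j y ^ 2 with hE
  have hE0 : ∀ j, 0 ≤ E j := fun j => by
    rw [hE]
    exact mul_nonneg (inv_nonneg.2 hG.le) (Finset.sum_nonneg fun y _ => sq_nonneg _)
  have hφnorm : ∀ j x, ‖φ j x‖ = 1 := fun j x => by
    exact AddChar.norm_apply (φ j) x
  have habs : ∀ j x, ‖ω j * φ j x‖ = 1 := fun j x => by
    rw [norm_mul, hω, hφnorm, mul_one]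
  -- the identity a² = (Re(z²)+1)/2
  have hid : ∀ (j) (y : G), a j y ^ 2 = (((ω j * φ j y) ^ 2).re + 1) / 2 := by
    intro j y
    have h := aux_re_sq (ω j * φ j y)
    rw [habs, one_pow] at h
    rw [ha]
    exact h
  -- key orthogonality (real form, folded)
  have hkey : ∀ T : Finset (Fin d), T.Nonempty → ∑ x : G, ∏ j ∈ T, a j x = 0 := by
    intro T hT
    have h := aux_key φ hdiss ω hω T hT
    simp only [ha]
    exact h
  -- pointwise square bound
  have hsq : ∀ (j) (x : G), a j x ^ 2 ≤ 2 * E j := by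
    intro j x
    by_cases h2 : (φ j) ^ (2:ℕ) = 1
    · have hc : ∀ y : G, (ω j * φ j y) ^ 2 = ω j ^ 2 := by
        intro y
        have h1 : (φ j y) ^ 2 = 1 := by
          have := congrArg (fun ψ : AddChar G ℂ => ψ y) h2
          simpa using this
        rw [mul_pow, h1, mul_one]
      have hconst : ∀ y : G, a j y ^ 2 = ((ω j ^ 2).re + 1) / 2 := fun y => by
        rw [hid j y, hc y]
      have hEeq : E j = ((ω j ^ 2).re + 1) / 2 := by
        rw [hE]
        simp only [hconst]
        rw [Finset.sum_const, Finset.card_univ, nsmul_eq_mul, ← mul_assoc,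
          inv_mul_cancel₀ hG.ne', one_mul]
      rw [hconst x, ← hEeq]
      linarith [hE0 j]
    · have hψ : ∑ y : G, ((φ j) ^ (2:ℕ)) y = 0 :=
        AddChar.sum_eq_zero_iff_ne_zero.2 (by rwa [← AddChar.one_eq_zero])
      have hs2 : ∑ y : G, (ω j * φ j y) ^ 2 = 0 := by
        have heq : ∀ y : G, (ω j * φ j y) ^ 2 = ω j ^ 2 * ((φ j) ^ (2:ℕ)) y := fun y => by
          rw [AddChar.pow_apply]; ring
        simp only [heq]
        rw [← Finset.mul_sum, hψ, mul_zero]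
      have hEeq : E j = 1 / 2 := by
        have hsum : ∑ y : G, ((((ω j * φ j y) ^ 2).re + 1) / 2) = N / 2 := by
          simp only [add_div]
          rw [Finset.sum_add_distrib, ← Finset.sum_div, ← Complex.re_sum, hs2]
          simp only [Complex.zero_re, zero_div, Finset.sum_const, Finset.card_univ,
            nsmul_eq_mul, zero_add, hN]
          ring
        rw [hE]
        simp only [hid]
        rw [hsum, ← mul_div_assoc, inv_mul_cancel₀ hG.ne']
      have hle1 : a j x ^ 2 ≤ 1 := by
        rw [hid j x]
        have hre := Complex.re_le_norm ((ω j * φ j x) ^ 2)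
        rw [norm_pow, habs, one_pow] at hre
        linarith
      rw [hEeq]; linarith
  -- cosh parameters
  set m : Fin d → ℝ := fun j => Real.sqrt (2 * E j) with hm
  have hm2 : ∀ j, m j ^ 2 = 2 * E j := fun j => Real.sq_sqrt (by linarith [hE0 j])
  set u : Fin d → ℝ := fun j => t * c j * m j with hu
  set s : Fin d → ℝ := fun j => Real.sinh (u j) / m j with hs
  -- pointwise exponential bound
  have hpt : ∀ (x : G) (j), Real.exp (t * c j * a j x) ≤ Real.cosh (u j) + a j x * s j := by
    intro x j
    rcases eq_or_lt_of_le (Real.sqrt_nonneg (2 * E j)) with h0 | h0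
    · have hmj : m j = 0 := by rw [hm]; exact h0.symm
      have h2E : 2 * E j = 0 := by rw [← hm2 j, hmj]; ring
      have haj : a j x = 0 := by nlinarith [hsq j x, sq_nonneg (a j x)]
      have huj : u j = 0 := by rw [hu]; simp [hmj]
      rw [haj, huj]
      simp
    · have hmj : 0 < m j := by rw [hm]; exact h0
      have hb := aux_convex (t * c j) (m j) (a j x) hmj (by rw [hm2]; exact hsq j x)
      rw [hu, hs]
      exact hb
  -- product bound
  have hprod : ∀ x : G, Real.exp (t * f x) ≤ ∏ j, (Real.cosh (u j) + a j x * s j) := by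
    intro x
    have he : t * f x = ∑ j, t * c j * a j x := by
      rw [hf x, Finset.mul_sum]
      exact Finset.sum_congr rfl fun j _ => by ring
    rw [he, Real.exp_sum]
    exact Finset.prod_le_prod (fun j _ => (Real.exp_pos _).le) (fun j _ => hpt x j)
  -- Riesz product expansion
  have hsumprod : ∑ x : G, ∏ j, (Real.cosh (u j) + a j x * s j)
      = N * ∏ j, Real.cosh (u j) := by
    have hx : ∀ x : G, ∏ j, (Real.cosh (u j) + a j x * s j)
        = ∑ T ∈ (Finset.univ : Finset (Fin d)).powerset,
            ((∏ j ∈ T, a j x) * ∏ j ∈ T, s j) * ∏ j ∈ Finset.univ \ T, Real.cosh (u j) := by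
      intro x
      calc ∏ j, (Real.cosh (u j) + a j x * s j)
          = ∏ j, (a j x * s j + Real.cosh (u j)) :=
            Finset.prod_congr rfl fun j _ => add_comm _ _
        _ = ∑ T ∈ (Finset.univ : Finset (Fin d)).powerset,
              (∏ j ∈ T, a j x * s j) * ∏ j ∈ Finset.univ \ T, Real.cosh (u j) :=
            Finset.prod_add _ _ _
        _ = _ := Finset.sum_congr rfl fun T _ => by rw [Finset.prod_mul_distrib]
    simp only [hx]
    rw [Finset.sum_comm]
    rw [Finset.sum_eq_single (∅ : Finset (Fin d))]
    · simp [Finset.sum_const, Finset.card_univ, hN]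
    · intro T _ hTne
      have h0 := hkey T (Finset.nonempty_iff_ne_empty.2 hTne)
      calc ∑ x : G, ((∏ j ∈ T, a j x) * ∏ j ∈ T, s j) * ∏ j ∈ Finset.univ \ T, Real.cosh (u j)
          = (∑ x : G, ∏ j ∈ T, a j x) * ((∏ j ∈ T, s j) * ∏ j ∈ Finset.univ \ T, Real.cosh (u j)) := by
            rw [Finset.sum_mul]
            exact Finset.sum_congr rfl fun x _ => by ring
        _ = 0 := by rw [h0, zero_mul]
    · intro h
      exact absurd (Finset.mem_powerset.2 (Finset.empty_subset _)) h
  -- second moment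
  have hEf : ∑ x : G, f x ^ 2 = ∑ j, c j ^ 2 * ∑ y : G, a j y ^ 2 := by
    have hx : ∀ x : G, f x ^ 2 = ∑ j, ∑ k, (c j * a j x) * (c k * a k x) := by
      intro x
      rw [hf x, sq, Finset.sum_mul_sum]
    simp only [hx]
    rw [Finset.sum_comm]
    refine Finset.sum_congr rfl fun j _ => ?_
    rw [Finset.sum_comm]
    rw [Finset.sum_eq_single j]
    · rw [Finset.mul_sum]
      exact Finset.sum_congr rfl fun x _ => by ring
    · intro k _ hkj
      have hT : ({j, k} : Finset (Fin d)).Nonempty := ⟨j, by simp⟩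
      have h0 := hkey {j, k} hT
      have hpair : ∀ x : G, ∏ i ∈ ({j, k} : Finset (Fin d)), a i x = a j x * a k x :=
        fun x => Finset.prod_pair (Ne.symm hkj)
      simp only [hpair] at h0
      calc ∑ x : G, (c j * a j x) * (c k * a k x)
          = (c j * c k) * ∑ x : G, a j x * a k x := by
            rw [Finset.mul_sum]
            exact Finset.sum_congr rfl fun x _ => by ring
        _ = 0 := by rw [h0, mul_zero]
    · intro h
      exact absurd (Finset.mem_univ j) h
  -- final assembly
  calc N⁻¹ * ∑ x : G, Real.exp (t * f x)
      ≤ N⁻¹ * ∑ x : G, ∏ j, (Real.cosh (u j) + a j x * s j) :=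
        mul_le_mul_of_nonneg_left (Finset.sum_le_sum fun x _ => hprod x) (inv_nonneg.2 hG.le)
    _ = ∏ j, Real.cosh (u j) := by
        rw [hsumprod, ← mul_assoc, inv_mul_cancel₀ hG.ne', one_mul]
    _ ≤ ∏ j, Real.exp (u j ^ 2 / 2) :=
        Finset.prod_le_prod (fun j _ => (Real.cosh_pos _).le)
          (fun j _ => Real.cosh_le_exp_half_sq _)
    _ = Real.exp (∑ j, u j ^ 2 / 2) := (Real.exp_sum _ _).symm
    _ = Real.exp (t ^ 2 * (N⁻¹ * ∑ x : G, f x ^ 2)) := by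
        congr 1
        rw [hEf, Finset.mul_sum, Finset.mul_sum]
        refine Finset.sum_congr rfl fun j _ => ?_
        have h1 : u j ^ 2 = t ^ 2 * c j ^ 2 * (2 * E j) := by
          rw [hu, ← hm2 j]; ring
        rw [h1, hE]
        ring
end

section
/- Let G be a finite abelian group, let ρ ∈ (0,1], let A ⊆ G with |A| = α|G| where α ∈ (0,1], and let Γ be the set of characters γ of G with |Â(γ)| ≥ ρα, where Â(γ) = |G|⁻¹ Σ_{x∈G} 1_A(x)γ(x). Then every dissociated subset Φ of Γ satisfies |Φ| ≤ 2ρ⁻² log(1/α). -/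
open Finset Complex


private lemma chang_aux_A {G : Type*} [AddCommGroup G] [Fintype G]
    (f g c : AddChar G ℂ → ℂ) (Φ : Finset (AddChar G ℂ)) :
    ∀ (ψ : AddChar G ℂ),
    (∀ ε : AddChar G ℂ → ℤ, (∀ γ, ε γ = -1 ∨ ε γ = 0 ∨ ε γ = 1) →
       ψ * ∏ γ ∈ Φ, γ ^ ε γ ≠ 1) →
    ∑ x : G, ψ x * ∏ φ ∈ Φ, (c φ + f φ * φ x + g φ * φ (-x)) = 0 := by
  classical
  induction Φ using Finset.induction_on with
  | empty =>
    intro ψ h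
    have hψ : ψ ≠ 1 := by simpa using h (fun _ => 0) (fun _ => Or.inr (Or.inl rfl))
    simpa using AddChar.sum_eq_zero_iff_ne_zero.2 hψ
  | @insert φ₀ s hφ₀ ih =>
    intro ψ h
    have key : ∀ x : G, ψ x * ∏ φ ∈ insert φ₀ s, (c φ + f φ * φ x + g φ * φ (-x))
        = c φ₀ * (ψ x * ∏ φ ∈ s, (c φ + f φ * φ x + g φ * φ (-x)))
        + f φ₀ * ((ψ * φ₀) x * ∏ φ ∈ s, (c φ + f φ * φ x + g φ * φ (-x)))
        + g φ₀ * ((ψ * φ₀⁻¹) x * ∏ φ ∈ s, (c φ + f φ * φ x + g φ * φ (-x))) := by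
      intro x
      rw [Finset.prod_insert hφ₀, AddChar.mul_apply, AddChar.mul_apply, AddChar.inv_apply]
      ring
    have trans : ∀ (j : ℤ), (j = -1 ∨ j = 0 ∨ j = 1) →
        ∀ ε : AddChar G ℂ → ℤ, (∀ γ, ε γ = -1 ∨ ε γ = 0 ∨ ε γ = 1) →
        (ψ * φ₀ ^ j) * ∏ γ ∈ s, γ ^ ε γ ≠ 1 := by
      intro j hj ε hε
      have h' := h (Function.update ε φ₀ j) (fun γ => by
        rcases eq_or_ne γ φ₀ with rfl | hne
        · simpa using hj
        · simpa [Function.update_of_ne hne] using hε γ)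
      rw [Finset.prod_insert hφ₀] at h'
      have hprod : (∏ γ ∈ s, γ ^ (Function.update ε φ₀ j γ)) = ∏ γ ∈ s, γ ^ ε γ :=
        Finset.prod_congr rfl (fun γ hγ => by
          rw [Function.update_of_ne (ne_of_mem_of_not_mem hγ hφ₀)])
      rw [Function.update_self, hprod] at h'
      simpa [mul_assoc] using h'
    calc ∑ x : G, ψ x * ∏ φ ∈ insert φ₀ s, (c φ + f φ * φ x + g φ * φ (-x))
        = c φ₀ * ∑ x : G, (ψ x * ∏ φ ∈ s, (c φ + f φ * φ x + g φ * φ (-x)))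
        + f φ₀ * ∑ x : G, ((ψ * φ₀) x * ∏ φ ∈ s, (c φ + f φ * φ x + g φ * φ (-x)))
        + g φ₀ * ∑ x : G, ((ψ * φ₀⁻¹) x * ∏ φ ∈ s, (c φ + f φ * φ x + g φ * φ (-x))) := by
          simp_rw [key, Finset.sum_add_distrib, Finset.mul_sum]
      _ = 0 := by
          rw [ih ψ (by simpa using trans 0 (Or.inr (Or.inl rfl))),
              ih (ψ * φ₀) (by simpa using trans 1 (Or.inr (Or.inr rfl))),
              ih (ψ * φ₀⁻¹) (by simpa using trans (-1) (Or.inl rfl))]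
          ring

private lemma chang_aux_B {G : Type*} [AddCommGroup G] [Fintype G]
    (f g c : AddChar G ℂ → ℂ) (Φ : Finset (AddChar G ℂ))
    (hdiss : ∀ ε : AddChar G ℂ → ℤ, (∀ γ, ε γ = -1 ∨ ε γ = 0 ∨ ε γ = 1) →
      (∏ γ ∈ Φ, γ ^ ε γ) = 1 → ∀ γ ∈ Φ, ε γ = 0) :
    ∑ x : G, ∏ φ ∈ Φ, (c φ + f φ * φ x + g φ * φ (-x))
      = (Fintype.card G : ℂ) * ∏ φ ∈ Φ, c φ := by
  classical
  induction Φ using Finset.induction_on with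
  | empty => simp [Finset.card_univ]
  | @insert φ₀ s hφ₀ ih =>
    have key : ∀ x : G, ∏ φ ∈ insert φ₀ s, (c φ + f φ * φ x + g φ * φ (-x))
        = c φ₀ * (∏ φ ∈ s, (c φ + f φ * φ x + g φ * φ (-x)))
        + f φ₀ * (φ₀ x * ∏ φ ∈ s, (c φ + f φ * φ x + g φ * φ (-x)))
        + g φ₀ * ((φ₀⁻¹ : AddChar G ℂ) x * ∏ φ ∈ s, (c φ + f φ * φ x + g φ * φ (-x))) := by
      intro x
      rw [Finset.prod_insert hφ₀, AddChar.inv_apply]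
      ring
    have hupd : ∀ (j : ℤ) (ε : AddChar G ℂ → ℤ), (∀ γ, ε γ = -1 ∨ ε γ = 0 ∨ ε γ = 1) →
        (j = -1 ∨ j = 0 ∨ j = 1) →
        φ₀ ^ j * ∏ γ ∈ s, γ ^ ε γ = 1 → j = 0 ∧ ∀ γ ∈ s, ε γ = 0 := by
      intro j ε hε hj hprod
      have hε' : ∀ γ, (Function.update ε φ₀ j) γ = -1 ∨ (Function.update ε φ₀ j) γ = 0 ∨
          (Function.update ε φ₀ j) γ = 1 := fun γ => by
        rcases eq_or_ne γ φ₀ with rfl | hne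
        · simpa using hj
        · simpa [Function.update_of_ne hne] using hε γ
      have hprod' : (∏ γ ∈ insert φ₀ s, γ ^ (Function.update ε φ₀ j γ)) = 1 := by
        rw [Finset.prod_insert hφ₀, Function.update_self,
          Finset.prod_congr rfl (fun γ hγ => by
            rw [Function.update_of_ne (ne_of_mem_of_not_mem hγ hφ₀)])]
        exact hprod
      have h0 := hdiss _ hε' hprod'
      refine ⟨by simpa using h0 φ₀ (Finset.mem_insert_self _ _), fun γ hγ => ?_⟩
      have := h0 γ (Finset.mem_insert_of_mem hγ)
      rwa [Function.update_of_ne (ne_of_mem_of_not_mem hγ hφ₀)] at this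
    have hsub : ∀ ε : AddChar G ℂ → ℤ, (∀ γ, ε γ = -1 ∨ ε γ = 0 ∨ ε γ = 1) →
        (∏ γ ∈ s, γ ^ ε γ) = 1 → ∀ γ ∈ s, ε γ = 0 := by
      intro ε hε hprod
      exact (hupd 0 ε hε (Or.inr (Or.inl rfl)) (by simpa using hprod)).2
    have hA1 : ∑ x : G, (φ₀ x * ∏ φ ∈ s, (c φ + f φ * φ x + g φ * φ (-x))) = 0 := by
      refine chang_aux_A f g c s φ₀ (fun ε hε hcon => ?_)
      have := (hupd 1 ε hε (Or.inr (Or.inr rfl)) (by simpa using hcon)).1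
      norm_num at this
    have hA2 : ∑ x : G, ((φ₀⁻¹ : AddChar G ℂ) x
        * ∏ φ ∈ s, (c φ + f φ * φ x + g φ * φ (-x))) = 0 := by
      refine chang_aux_A f g c s φ₀⁻¹ (fun ε hε hcon => ?_)
      have := (hupd (-1) ε hε (Or.inl rfl) (by simpa using hcon)).1
      norm_num at this
    calc ∑ x : G, ∏ φ ∈ insert φ₀ s, (c φ + f φ * φ x + g φ * φ (-x))
        = c φ₀ * ∑ x : G, (∏ φ ∈ s, (c φ + f φ * φ x + g φ * φ (-x)))
        + f φ₀ * ∑ x : G, (φ₀ x * ∏ φ ∈ s, (c φ + f φ * φ x + g φ * φ (-x)))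
        + g φ₀ * ∑ x : G, ((φ₀⁻¹ : AddChar G ℂ) x
            * ∏ φ ∈ s, (c φ + f φ * φ x + g φ * φ (-x))) := by
          simp_rw [key, Finset.sum_add_distrib, Finset.mul_sum]
      _ = (Fintype.card G : ℂ) * ∏ φ ∈ insert φ₀ s, c φ := by
          rw [ih hsub, hA1, hA2, Finset.prod_insert hφ₀]; ring

private lemma chang_chord (ρ c : ℝ) (h1 : -1 ≤ c) (h2 : c ≤ 1) :
    Real.exp (ρ * c) ≤ Real.cosh ρ + c * Real.sinh ρ := by
  have key := Real.geom_mean_le_arith_mean2_weighted (w₁ := (1+c)/2) (w₂ := (1-c)/2)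
    (p₁ := Real.exp ρ) (p₂ := Real.exp (-ρ)) (by linarith) (by linarith)
    (Real.exp_pos ρ).le (Real.exp_pos (-ρ)).le (by ring)
  have e1 : Real.exp ρ ^ ((1+c)/2) = Real.exp (ρ * ((1+c)/2)) := by
    rw [← Real.exp_mul]
  have e2 : Real.exp (-ρ) ^ ((1-c)/2) = Real.exp (-ρ * ((1-c)/2)) := by
    rw [← Real.exp_mul]
  rw [e1, e2, ← Real.exp_add] at key
  have : ρ * ((1+c)/2) + -ρ * ((1-c)/2) = ρ * c := by ring
  rw [this] at key
  calc Real.exp (ρ * c) ≤ (1+c)/2 * Real.exp ρ + (1-c)/2 * Real.exp (-ρ) := key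
    _ = Real.cosh ρ + c * Real.sinh ρ := by rw [Real.cosh_eq, Real.sinh_eq]; ring


private lemma chang_expsum {G : Type*} (A : Finset G) (t : G → ℝ) (m : ℝ)
    (hm : m * A.card ≤ ∑ x ∈ A, t x) :
    (A.card : ℝ) * Real.exp m ≤ ∑ x ∈ A, Real.exp (t x) := by
  have h1 : ∀ x ∈ A, Real.exp m * (1 + (t x - m)) ≤ Real.exp (t x) := by
    intro x _
    have h := Real.add_one_le_exp (t x - m)
    calc Real.exp m * (1 + (t x - m)) ≤ Real.exp m * Real.exp (t x - m) := by
          have := Real.exp_pos m; nlinarith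
      _ = Real.exp (t x) := by rw [← Real.exp_add]; ring_nf
  have h2 : ∑ x ∈ A, Real.exp m * (1 + (t x - m))
      = Real.exp m * (A.card + ((∑ x ∈ A, t x) - m * A.card)) := by
    rw [← Finset.mul_sum, Finset.sum_add_distrib, Finset.sum_sub_distrib,
      Finset.sum_const, Finset.sum_const]
    simp [nsmul_eq_mul]
    ring
  calc (A.card : ℝ) * Real.exp m ≤ ∑ x ∈ A, Real.exp m * (1 + (t x - m)) := by
        rw [h2]
        have := Real.exp_pos m
        nlinarith
    _ ≤ ∑ x ∈ A, Real.exp (t x) := Finset.sum_le_sum h1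


/-- **Chang's inequality.** If `A` has density `α` in `G` and `Φ` is a dissociated set of
characters each of whose Fourier coefficients on `A` is at least `ρα` in modulus, then
`|Φ| ≤ 2ρ⁻² log(1/α)`. -/
theorem stmt6 {G : Type*} [AddCommGroup G] [Fintype G] (ρ α : ℝ)
    (hρ0 : 0 < ρ) (hρ1 : ρ ≤ 1) (hα0 : 0 < α) (hα1 : α ≤ 1)
    (A : Finset G) (hcard : (A.card : ℝ) = α * Fintype.card G)
    (Φ : Finset (AddChar G ℂ))
    (hΦΓ : ∀ φ ∈ Φ, ρ * α ≤ ‖(Fintype.card G : ℂ)⁻¹ * ∑ x ∈ A, φ x‖)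
    (hdiss : ∀ ε : AddChar G ℂ → ℤ, (∀ γ, ε γ = -1 ∨ ε γ = 0 ∨ ε γ = 1) →
      (∏ γ ∈ Φ, γ ^ ε γ) = 1 → ∀ γ ∈ Φ, ε γ = 0) :
    (Φ.card : ℝ) ≤ 2 / ρ ^ 2 * Real.log (1 / α) := by
  classical
  have hN : (0:ℝ) < Fintype.card G := by positivity
  have hA0 : (0:ℝ) < A.card := by rw [hcard]; positivity
  set S : AddChar G ℂ → ℂ := fun φ => ∑ x ∈ A, φ x with hSdef
  -- lower bound on |S φ|
  have hS : ∀ φ ∈ Φ, ρ * A.card ≤ ‖S φ‖ := by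
    intro φ hφ
    have h := hΦΓ φ hφ
    rw [norm_mul, norm_inv, Complex.norm_natCast] at h
    have := mul_le_mul_of_nonneg_left h (le_of_lt hN)
    rw [hcard]
    calc ρ * (α * Fintype.card G) = Fintype.card G * (ρ * α) := by ring
      _ ≤ Fintype.card G * ((Fintype.card G : ℝ)⁻¹ * ‖S φ‖) := this
      _ = ‖S φ‖ := by field_simp
  have hSne : ∀ φ ∈ Φ, S φ ≠ 0 := by
    intro φ hφ h0
    have := hS φ hφ
    rw [h0, norm_zero] at this
    nlinarith
  set z : AddChar G ℂ → ℂ := fun φ => ((‖S φ‖ : ℝ) : ℂ) / S φ with hzdef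
  have hzS : ∀ φ ∈ Φ, z φ * S φ = ((‖S φ‖ : ℝ) : ℂ) := by
    intro φ hφ; exact div_mul_cancel₀ _ (hSne φ hφ)
  have hz1 : ∀ φ ∈ Φ, ‖z φ‖ = 1 := by
    intro φ hφ
    rw [hzdef]
    simp only [norm_div, Complex.norm_real, norm_norm]
    rw [div_self (norm_ne_zero_iff.2 (hSne φ hφ))]
  -- real part bounds
  have hre : ∀ φ ∈ Φ, ∀ x : G, |(z φ * φ x).re| ≤ 1 := by
    intro φ hφ x
    have habs : ‖z φ * φ x‖ = 1 := by
      rw [norm_mul, hz1 φ hφ, AddChar.norm_apply, mul_one]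
    calc |(z φ * φ x).re| ≤ ‖z φ * φ x‖ := Complex.abs_re_le_norm _
      _ = 1 := habs
  -- the Riesz product
  set p : G → ℝ := fun x => ∏ φ ∈ Φ, (Real.cosh ρ + (z φ * φ x).re * Real.sinh ρ) with hpdef
  set t : G → ℝ := fun x => ρ * ∑ φ ∈ Φ, (z φ * φ x).re with htdef
  have hfac : ∀ φ ∈ Φ, ∀ x : G,
      Real.exp (ρ * (z φ * φ x).re) ≤ Real.cosh ρ + (z φ * φ x).re * Real.sinh ρ := by
    intro φ hφ x
    have := hre φ hφ x
    exact chang_chord ρ _ (by cases abs_le.1 this; linarith) (abs_le.1 this).2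
  have hpe : ∀ x : G, Real.exp (t x) ≤ p x := by
    intro x
    rw [htdef, hpdef]
    simp only
    rw [Finset.mul_sum, Real.exp_sum]
    exact Finset.prod_le_prod (fun φ _ => (Real.exp_pos _).le) (fun φ hφ => hfac φ hφ x)
  have hp0 : ∀ x : G, 0 ≤ p x := fun x => le_trans (Real.exp_pos (t x)).le (hpe x)
  -- total sum of p
  have hsum : ∑ x : G, p x = (Fintype.card G : ℝ) * Real.cosh ρ ^ Φ.card := by
    have hB := chang_aux_B (fun φ => (Real.sinh ρ : ℂ) / 2 * z φ)
      (fun φ => (Real.sinh ρ : ℂ) / 2 * (starRingEnd ℂ) (z φ))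
      (fun _ => (Real.cosh ρ : ℂ)) Φ hdiss
    have hfactor : ∀ (φ : AddChar G ℂ) (x : G),
        (Real.cosh ρ : ℂ) + (Real.sinh ρ : ℂ) / 2 * z φ * φ x
          + (Real.sinh ρ : ℂ) / 2 * (starRingEnd ℂ) (z φ) * φ (-x)
        = ((Real.cosh ρ + (z φ * φ x).re * Real.sinh ρ : ℝ) : ℂ) := by
      intro φ x
      have h2 : (Real.cosh ρ : ℂ) + (Real.sinh ρ : ℂ) / 2 * z φ * φ x
          + (Real.sinh ρ : ℂ) / 2 * (starRingEnd ℂ) (z φ) * (starRingEnd ℂ) (φ x)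
          = (Real.cosh ρ : ℂ)
          + (Real.sinh ρ : ℂ) / 2 * ((z φ * φ x) + (starRingEnd ℂ) (z φ * φ x)) := by
        rw [map_mul]; ring
      rw [AddChar.map_neg_eq_conj, h2, Complex.add_conj]
      push_cast [-Complex.ofReal_cosh, -Complex.ofReal_sinh]
      ring
    have : ((∑ x : G, p x : ℝ) : ℂ) = ((Fintype.card G : ℝ) * Real.cosh ρ ^ Φ.card : ℝ) := by
      push_cast [-Complex.ofReal_cosh, -Complex.ofReal_sinh]
      rw [show ((Fintype.card G : ℂ)) * (Real.cosh ρ : ℂ) ^ Φ.card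
          = (Fintype.card G : ℂ) * ∏ _φ ∈ Φ, (Real.cosh ρ : ℂ) by rw [Finset.prod_const]]
      rw [← hB]
      refine Finset.sum_congr rfl (fun x _ => ?_)
      rw [hpdef]
      push_cast [-Complex.ofReal_cosh, -Complex.ofReal_sinh]
      refine Finset.prod_congr rfl (fun φ _ => ?_)
      rw [hfactor φ x]
      push_cast [-Complex.ofReal_cosh, -Complex.ofReal_sinh]
      ring
    exact_mod_cast this
  -- lower bound on sum of t over A
  have htA : (Φ.card : ℝ) * ρ ^ 2 * A.card ≤ ∑ x ∈ A, t x := by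
    have hswap : ∑ x ∈ A, t x = ρ * ∑ φ ∈ Φ, (z φ * S φ).re := by
      rw [htdef]
      simp only
      rw [← Finset.mul_sum, Finset.sum_comm]
      congr 1
      refine Finset.sum_congr rfl (fun φ _ => ?_)
      rw [hSdef]
      simp only
      rw [Finset.mul_sum, Complex.re_sum]
    rw [hswap]
    have hterm : ∀ φ ∈ Φ, ρ * A.card ≤ (z φ * S φ).re := by
      intro φ hφ
      rw [hzS φ hφ, Complex.ofReal_re]
      exact hS φ hφ
    calc (Φ.card : ℝ) * ρ ^ 2 * A.card = ρ * (Φ.card * (ρ * A.card)) := by ring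
      _ ≤ ρ * ∑ φ ∈ Φ, (z φ * S φ).re := by
          refine mul_le_mul_of_nonneg_left ?_ hρ0.le
          calc (Φ.card : ℝ) * (ρ * A.card) = ∑ _φ ∈ Φ, ρ * A.card := by
                rw [Finset.sum_const, nsmul_eq_mul]
            _ ≤ ∑ φ ∈ Φ, (z φ * S φ).re := Finset.sum_le_sum hterm
  -- main chain
  have hmain : (A.card : ℝ) * Real.exp ((Φ.card : ℝ) * ρ ^ 2)
      ≤ (Fintype.card G : ℝ) * Real.cosh ρ ^ Φ.card := by
    calc (A.card : ℝ) * Real.exp ((Φ.card : ℝ) * ρ ^ 2)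
        ≤ ∑ x ∈ A, Real.exp (t x) := chang_expsum A t _ (by
            calc (Φ.card : ℝ) * ρ ^ 2 * A.card ≤ ∑ x ∈ A, t x := htA)
      _ ≤ ∑ x ∈ A, p x := Finset.sum_le_sum (fun x _ => hpe x)
      _ ≤ ∑ x : G, p x := Finset.sum_le_sum_of_subset_of_nonneg (Finset.subset_univ A)
            (fun x _ _ => hp0 x)
      _ = (Fintype.card G : ℝ) * Real.cosh ρ ^ Φ.card := hsum
  -- take logs
  have hcosh : Real.log (Real.cosh ρ) ≤ ρ ^ 2 / 2 := by
    rw [Real.log_le_iff_le_exp (Real.cosh_pos ρ)]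
    exact Real.cosh_le_exp_half_sq ρ
  have hαcard : (A.card : ℝ) = α * Fintype.card G := hcard
  have hexp : Real.exp ((Φ.card : ℝ) * ρ ^ 2) ≤ (1/α) * Real.cosh ρ ^ Φ.card := by
    rw [hαcard] at hmain
    have h1α : (0:ℝ) < 1/α := by positivity
    have := mul_le_mul_of_nonneg_left hmain (le_of_lt (by positivity : (0:ℝ) < 1/(α * Fintype.card G)))
    calc Real.exp ((Φ.card : ℝ) * ρ ^ 2)
        = 1/(α * Fintype.card G) * (α * Fintype.card G * Real.exp ((Φ.card : ℝ) * ρ ^ 2)) := by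
          field_simp
      _ ≤ 1/(α * Fintype.card G) * (Fintype.card G * Real.cosh ρ ^ Φ.card) := this
      _ = (1/α) * Real.cosh ρ ^ Φ.card := by field_simp
  have hlog : (Φ.card : ℝ) * ρ ^ 2 ≤ Real.log (1/α) + Φ.card * (ρ ^ 2 / 2) := by
    have h2 : Real.log (Real.exp ((Φ.card : ℝ) * ρ ^ 2)) ≤ Real.log ((1/α) * Real.cosh ρ ^ Φ.card) :=
      Real.log_le_log (Real.exp_pos _) hexp
    rw [Real.log_exp, Real.log_mul (by positivity) (by positivity), Real.log_pow] at h2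
    calc (Φ.card : ℝ) * ρ ^ 2 ≤ Real.log (1/α) + Φ.card * Real.log (Real.cosh ρ) := h2
      _ ≤ Real.log (1/α) + Φ.card * (ρ ^ 2 / 2) := by
          have : (0:ℝ) ≤ Φ.card := Nat.cast_nonneg _
          nlinarith
  have hρ2 : (0:ℝ) < ρ ^ 2 := by positivity
  rw [div_mul_eq_mul_div, le_div_iff₀ hρ2]
  nlinarith
end

section
/- Let G be a finite abelian group and A ⊆ G a nonempty set with |A + A| ≤ K|A|. Then 2A - 2A contains a Bohr set B(Γ, δ) where |Γ| ≤ 8K·log(1/α) and δ ≥ (48K·log(1/α))⁻¹, with α = |A|/|G|. -/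
open scoped Pointwise
open Finset Complex
set_option linter.unusedSectionVars false
set_option maxHeartbeats 1000000

section BCAux
variable {G : Type*} [AddCommGroup G] [Fintype G] [DecidableEq G]




/-- Evaluation of a product of additive characters. -/
lemma BCprodApply {ι : Type*} (s : Finset ι) (f : ι → AddChar G ℂ) (x : G) :
    (∏ l ∈ s, f l) x = ∏ l ∈ s, f l x := by
  classical
  induction s using Finset.induction with
  | empty => simp
  | insert _ _ h ih => rw [Finset.prod_insert h, Finset.prod_insert h, AddChar.mul_apply, ih]

/-- Dissociated set of characters: all subset products are distinct. -/
def BCDiss (Λ : Finset (AddChar G ℂ)) : Prop :=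
  ∀ P ⊆ Λ, ∀ Q ⊆ Λ, (∏ l ∈ P, l) = (∏ l ∈ Q, l) → P = Q

omit [Fintype G] in
lemma BCDiss_empty : BCDiss (∅ : Finset (AddChar G ℂ)) := by
  intro P hP Q hQ _
  simp [Finset.subset_empty.1 hP, Finset.subset_empty.1 hQ]

lemma BCchar_ne_one (Λ T V : Finset (AddChar G ℂ)) (hd : BCDiss Λ) (hT : T ⊆ Λ) (hV : V ⊆ Λ)
    (hdisj : Disjoint T V) (hne : T.Nonempty ∨ V.Nonempty) :
    (∏ l ∈ T, l) * (∏ l ∈ V, l)⁻¹ ≠ 1 := by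
  intro h
  have h2 : (∏ l ∈ T, l) = (∏ l ∈ V, l) := by
    rwa [mul_inv_eq_one] at h
  have := hd T hT V hV h2
  subst this
  have : T = ∅ := by simpa using hdisj
  subst this
  simp at hne

/-- Key orthogonality for Riesz products: sums of products of real parts vanish. -/
lemma BCsum_prod_re (Λ U : Finset (AddChar G ℂ)) (hd : BCDiss Λ) (hU : U ⊆ Λ)
    (hne : U.Nonempty) (θ : AddChar G ℂ → ℂ) :
    ∑ x : G, ∏ l ∈ U, (θ l * l x).re = 0 := by
  classical
  rw [← Complex.ofReal_eq_zero]
  push_cast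
  have hre : ∀ (x : G) (l : AddChar G ℂ),
      ((θ l * l x).re : ℂ) = (θ l * l x + (starRingEnd ℂ) (θ l) * (l⁻¹ x)) / 2 := by
    intro x l
    have h1 : (starRingEnd ℂ) (θ l) * (l⁻¹ x) = (starRingEnd ℂ) (θ l * l x) := by
      rw [map_mul, AddChar.inv_apply', AddChar.inv_apply_eq_conj]
    rw [h1, eq_div_iff (two_ne_zero), Complex.add_conj]
    push_cast; ring
  calc ∑ x : G, ∏ l ∈ U, ((θ l * l x).re : ℂ)
      = ∑ x : G, ∏ l ∈ U, ((θ l * l x + (starRingEnd ℂ) (θ l) * (l⁻¹ x)) / 2) := by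
        refine Finset.sum_congr rfl fun x _ => Finset.prod_congr rfl fun l _ => hre x l
    _ = 0 := by
        simp_rw [div_eq_mul_inv, Finset.prod_mul_distrib, Finset.prod_const, ← Finset.sum_mul]
        have key : ∑ x : G, ∏ l ∈ U, (θ l * l x + (starRingEnd ℂ) (θ l) * (l⁻¹ x)) = 0 := by
          have expand : ∀ x : G, ∏ l ∈ U, (θ l * l x + (starRingEnd ℂ) (θ l) * (l⁻¹ x))
              = ∑ T ∈ U.powerset, ((∏ l ∈ T, θ l) * ∏ l ∈ U \ T, (starRingEnd ℂ) (θ l)) *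
                  ((∏ l ∈ T, l) * ∏ l ∈ U \ T, l⁻¹) x := by
            intro x
            rw [Finset.prod_add]
            refine Finset.sum_congr rfl fun T hT => ?_
            rw [Finset.prod_mul_distrib, Finset.prod_mul_distrib, AddChar.mul_apply,
              BCprodApply, BCprodApply]
            ring
          simp_rw [expand]
          rw [Finset.sum_comm]
          refine Finset.sum_eq_zero fun T hT => ?_
          rw [← Finset.mul_sum]
          have hψ : (∏ l ∈ T, l) * ∏ l ∈ U \ T, l⁻¹ ≠ 1 := by
            rw [Finset.prod_inv_distrib]
            refine BCchar_ne_one Λ T (U \ T) hd (fun t ht => hU (Finset.mem_powerset.1 hT ht))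
              (fun t ht => hU (Finset.mem_sdiff.1 ht).1) (Finset.disjoint_sdiff) ?_
            rcases Finset.eq_empty_or_nonempty T with h | h
            · right; subst h; simpa using hne
            · left; exact h
          have : ∑ x : G, ((∏ l ∈ T, l) * ∏ l ∈ U \ T, l⁻¹) x = 0 :=
            AddChar.sum_eq_zero_iff_ne_zero.2 hψ
          rw [this, mul_zero]
        rw [key, zero_mul]


lemma BCriesz (Λ : Finset (AddChar G ℂ)) (hd : ∀ (U : Finset (AddChar G ℂ)), U ⊆ Λ → U.Nonempty →
      ∀ θ : AddChar G ℂ → ℂ, ∑ x : G, ∏ l ∈ U, (θ l * l x).re = 0)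
    (θ : AddChar G ℂ → ℂ) (t : ℝ) :
    ∑ x : G, ∏ l ∈ Λ, (Real.cosh t + (θ l * l x).re * Real.sinh t)
      = (Fintype.card G : ℝ) * Real.cosh t ^ Λ.card := by
  classical
  have expand : ∀ x : G, ∏ l ∈ Λ, (Real.cosh t + (θ l * l x).re * Real.sinh t)
      = ∑ T ∈ Λ.powerset, Real.cosh t ^ T.card *
          (Real.sinh t ^ (Λ \ T).card * ∏ l ∈ Λ \ T, (θ l * l x).re) := by
    intro x
    rw [Finset.prod_add]
    refine Finset.sum_congr rfl fun T hT => ?_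
    rw [Finset.prod_const, Finset.prod_mul_distrib, Finset.prod_const]
    ring
  simp_rw [expand]
  rw [Finset.sum_comm]
  rw [Finset.sum_eq_single_of_mem Λ (Finset.mem_powerset_self Λ)]
  · simp
  · intro T hT hTne
    rw [← Finset.mul_sum, ← Finset.mul_sum]
    rw [hd (Λ \ T) (Finset.sdiff_subset) ?_ θ, mul_zero, mul_zero]
    rw [Finset.sdiff_nonempty]
    intro hsub
    exact hTne (Finset.Subset.antisymm (Finset.mem_powerset.1 hT) hsub)


lemma BCexp_le (c t : ℝ) (hc : |c| ≤ 1) :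
    Real.exp (t * c) ≤ Real.cosh t + c * Real.sinh t := by
  rw [abs_le] at hc
  have h := convexOn_exp.2 (Set.mem_univ t) (Set.mem_univ (-t))
    (by linarith : (0:ℝ) ≤ (1 + c)/2) (by linarith : (0:ℝ) ≤ (1 - c)/2) (by ring)
  simp only [smul_eq_mul] at h
  have he : (1 + c)/2 * t + (1 - c)/2 * (-t) = t * c := by ring
  rw [he] at h
  rw [Real.cosh_eq, Real.sinh_eq]
  calc Real.exp (t * c) ≤ (1 + c)/2 * Real.exp t + (1 - c)/2 * Real.exp (-t) := h
    _ = (Real.exp t + Real.exp (-t))/2 + c * ((Real.exp t - Real.exp (-t))/2) := by ring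

lemma BCchang (A : Finset G) (hA : A.Nonempty) (ρ : ℝ) (hρ : 0 < ρ)
    (hcard : (A.card : ℝ) < Fintype.card G)
    (Λ : Finset (AddChar G ℂ))
    (hriesz : ∀ θ : AddChar G ℂ → ℂ,
       ∑ x : G, ∏ l ∈ Λ, (Real.cosh ρ + (θ l * l x).re * Real.sinh ρ)
         = (Fintype.card G : ℝ) * Real.cosh ρ ^ Λ.card)
    (hspec : ∀ l ∈ Λ, ρ * A.card ≤ ‖∑ a ∈ A, l a‖) :
    (Λ.card : ℝ) * ρ ^ 2 ≤ 2 * Real.log ((Fintype.card G : ℝ) / A.card) := by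
  classical
  set N : ℝ := (Fintype.card G : ℝ) with hN
  set m : ℝ := (Λ.card : ℝ) with hm
  set L : ℝ := Real.log (N / A.card) with hL
  set F : AddChar G ℂ → ℂ := fun l => ∑ a ∈ A, l a with hF
  set θ : AddChar G ℂ → ℂ := fun l => (starRingEnd ℂ) (F l) / (‖F l‖ : ℂ) with hθ
  set f : G → ℝ := fun x => ∑ l ∈ Λ, (θ l * l x).re with hf
  have hA0 : (0:ℝ) < A.card := by exact_mod_cast Finset.card_pos.2 hA
  have hN0 : (0:ℝ) < N := lt_trans hA0 hcard
  have hFpos : ∀ l ∈ Λ, (0:ℝ) < ‖F l‖ := fun l hl =>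
    lt_of_lt_of_le (by positivity) (hspec l hl)
  have hθF : ∀ l ∈ Λ, θ l * F l = (‖F l‖ : ℂ) := by
    intro l hl
    have h0 := hFpos l hl
    have hne : (‖F l‖ : ℂ) ≠ 0 := by exact_mod_cast ne_of_gt h0
    calc θ l * F l = ((F l) * (starRingEnd ℂ) (F l)) / (‖F l‖ : ℂ) := by rw [hθ]; ring
      _ = ((‖F l‖ : ℂ))^2 / (‖F l‖ : ℂ) := by rw [Complex.mul_conj']
      _ = (‖F l‖ : ℂ) := by rw [sq, mul_div_assoc, div_self hne, mul_one]
  have hθ1 : ∀ l ∈ Λ, ‖θ l‖ = 1 := by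
    intro l hl
    rw [hθ]
    simp only [norm_div, RCLike.norm_conj, Complex.norm_real, Real.norm_eq_abs]
    rw [_root_.abs_of_nonneg (norm_nonneg (F l))]
    exact div_self (ne_of_gt (hFpos l hl))
  have hre1 : ∀ (l : AddChar G ℂ), l ∈ Λ → ∀ x : G, |(θ l * l x).re| ≤ 1 := by
    intro l hl x
    calc |(θ l * l x).re| ≤ ‖θ l * l x‖ := Complex.abs_re_le_norm _
      _ = ‖θ l‖ * ‖l x‖ := norm_mul _ _
      _ = 1 := by rw [hθ1 l hl, AddChar.norm_apply, mul_one]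
  -- lower bound on ∑_{x∈A} f x
  have h1 : ∑ x ∈ A, f x = ∑ l ∈ Λ, ‖F l‖ := by
    rw [hf]
    rw [Finset.sum_comm]
    refine Finset.sum_congr rfl fun l hl => ?_
    have : ∑ x ∈ A, (θ l * l x).re = (∑ x ∈ A, θ l * l x).re := by
      rw [Complex.re_sum]
    rw [this, ← Finset.mul_sum, show (∑ i ∈ A, l i) = F l from rfl, hθF l hl]
    simp
  have h2 : m * (ρ * A.card) ≤ ∑ x ∈ A, f x := by
    rw [h1, hm]
    calc (Λ.card : ℝ) * (ρ * A.card) = ∑ _l ∈ Λ, ρ * A.card := by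
          rw [Finset.sum_const, nsmul_eq_mul]
      _ ≤ ∑ l ∈ Λ, ‖F l‖ := Finset.sum_le_sum hspec
  -- upper bound on ∑_{x ∈ G} exp (ρ * f x)
  have h5 : ∑ x : G, Real.exp (ρ * f x) ≤ N * Real.cosh ρ ^ Λ.card := by
    rw [← hriesz θ]
    refine Finset.sum_le_sum fun x _ => ?_
    rw [hf, Finset.mul_sum, Real.exp_sum]
    refine Finset.prod_le_prod (fun l _ => (Real.exp_pos _).le) fun l hl => ?_
    exact BCexp_le _ _ (hre1 l hl x)
  have h6 : Real.cosh ρ ^ Λ.card ≤ Real.exp (ρ^2 * m / 2) := by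
    calc Real.cosh ρ ^ Λ.card ≤ Real.exp (ρ^2/2) ^ Λ.card := by
          exact pow_le_pow_left₀ (by positivity) (Real.cosh_le_exp_half_sq ρ) _
      _ = Real.exp (ρ^2 * m / 2) := by
          rw [← Real.exp_nat_mul]; congr 1; rw [hm]; ring
  set s : ℝ := L + ρ^2 * m / 2 with hs
  have hexpL : Real.exp (-L) = A.card / N := by
    rw [Real.exp_neg, hL, Real.exp_log (by positivity)]
    rw [inv_div]
  have chain : ρ * ∑ x ∈ A, f x ≤ A.card * s := by
    have step1 : ∀ x ∈ A, ρ * f x ≤ s - 1 + Real.exp (ρ * f x) * Real.exp (-s) := by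
      intro x _
      have := Real.add_one_le_exp (ρ * f x - s)
      rw [Real.exp_sub, div_eq_mul_inv, ← Real.exp_neg] at this
      linarith
    calc ρ * ∑ x ∈ A, f x = ∑ x ∈ A, ρ * f x := by rw [Finset.mul_sum]
      _ ≤ ∑ x ∈ A, (s - 1 + Real.exp (ρ * f x) * Real.exp (-s)) :=
          Finset.sum_le_sum step1
      _ = A.card * (s - 1) + (∑ x ∈ A, Real.exp (ρ * f x)) * Real.exp (-s) := by
          rw [Finset.sum_add_distrib, Finset.sum_const, nsmul_eq_mul, ← Finset.sum_mul]
      _ ≤ A.card * (s - 1) + (∑ x : G, Real.exp (ρ * f x)) * Real.exp (-s) := by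
          have : ∑ x ∈ A, Real.exp (ρ * f x) ≤ ∑ x : G, Real.exp (ρ * f x) :=
            Finset.sum_le_sum_of_subset_of_nonneg (Finset.subset_univ A)
              (fun x _ _ => (Real.exp_pos _).le)
          have h0 := (Real.exp_pos (-s)).le
          nlinarith
      _ ≤ A.card * (s - 1) + (N * Real.exp (ρ^2 * m / 2)) * Real.exp (-s) := by
          have h0 := (Real.exp_pos (-s)).le
          have := le_trans h5 (by nlinarith [h6] : N * Real.cosh ρ ^ Λ.card ≤ N * Real.exp (ρ^2 * m/2))
          nlinarith
      _ = A.card * (s - 1) + N * Real.exp (-L) := by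
          rw [mul_assoc, ← Real.exp_add (ρ^2*m/2) (-s)]
          have hh : ρ^2*m/2 + -s = -L := by rw [hs]; ring
          rw [hh]
      _ = A.card * s := by
          rw [hexpL]
          field_simp
          ring
  -- combine
  have final : ρ * (m * (ρ * A.card)) ≤ A.card * (L + ρ^2 * m / 2) := by
    calc ρ * (m * (ρ * A.card)) ≤ ρ * ∑ x ∈ A, f x := by nlinarith [h2]
      _ ≤ A.card * s := chain
  nlinarith [final, hA0]


lemma BCconj_mul (γ : AddChar G ℂ) (a b : G) : γ a * (starRingEnd ℂ) (γ b) = γ (a - b) := by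
  rw [sub_eq_add_neg, AddChar.map_add_eq_mul, AddChar.map_neg_eq_conj]

/-- Parseval: `∑ γ, ‖F γ‖² = N·|A|`. -/
lemma BCparseval (A : Finset G) :
    ∑ γ : AddChar G ℂ, ‖∑ a ∈ A, γ a‖^2 = (Fintype.card G : ℝ) * A.card := by
  have key : ∑ γ : AddChar G ℂ, ((∑ a ∈ A, γ a) * (starRingEnd ℂ) (∑ a ∈ A, γ a))
      = (Fintype.card G : ℂ) * A.card := by
    have expand : ∀ γ : AddChar G ℂ, (∑ a ∈ A, γ a) * (starRingEnd ℂ) (∑ a ∈ A, γ a)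
        = ∑ a ∈ A, ∑ b ∈ A, γ (a - b) := by
      intro γ
      rw [map_sum, Finset.sum_mul_sum]
      exact Finset.sum_congr rfl fun a _ => Finset.sum_congr rfl fun b _ => BCconj_mul γ a b
    simp_rw [expand]
    rw [Finset.sum_comm]
    have inner : ∀ a ∈ A, (∑ γ : AddChar G ℂ, ∑ b ∈ A, γ (a - b))
        = (Fintype.card G : ℂ) := by
      intro a ha
      rw [Finset.sum_comm]
      have hb : ∀ b ∈ A, ∑ γ : AddChar G ℂ, γ (a - b)
          = if a - b = 0 then (Fintype.card G : ℂ) else 0 := fun b _ =>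
        AddChar.sum_apply_eq_ite (a - b)
      rw [Finset.sum_congr rfl hb]
      simp only [sub_eq_zero]
      rw [Finset.sum_ite_eq, if_pos ha]
    rw [Finset.sum_congr rfl inner, Finset.sum_const, nsmul_eq_mul, mul_comm]
  have cast : ∀ γ : AddChar G ℂ, (∑ a ∈ A, γ a) * (starRingEnd ℂ) (∑ a ∈ A, γ a)
      = ((‖∑ a ∈ A, γ a‖^2 : ℝ) : ℂ) := by
    intro γ; rw [Complex.mul_conj']; push_cast; ring
  rw [Finset.sum_congr rfl (fun γ _ => cast γ)] at key
  rw [← Complex.ofReal_sum] at key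
  exact_mod_cast key

/-- Master identity. -/
lemma BCmaster (A : Finset G) (x : G) :
    ∑ γ : AddChar G ℂ, ((‖∑ a ∈ A, γ a‖^2 : ℝ) : ℂ)^2 * γ x
      = (Fintype.card G : ℂ) *
        ∑ a ∈ A, ∑ b ∈ A, ∑ c ∈ A, ∑ d ∈ A, if c + d - b - a + x = 0 then 1 else 0 := by
  have expand : ∀ γ : AddChar G ℂ, ((‖∑ a ∈ A, γ a‖^2 : ℝ) : ℂ)^2 * γ x
      = ∑ a ∈ A, ∑ b ∈ A, ∑ c ∈ A, ∑ d ∈ A, γ (c + d - b - a + x) := by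
    intro γ
    have h1 : ((‖∑ a ∈ A, γ a‖^2 : ℝ) : ℂ)
        = (∑ a ∈ A, γ a) * (starRingEnd ℂ) (∑ a ∈ A, γ a) := by
      rw [Complex.mul_conj']; push_cast; ring
    rw [h1, mul_pow, sq, sq]
    simp only [map_sum, Finset.sum_mul, Finset.mul_sum]
    refine Finset.sum_congr rfl fun a _ => Finset.sum_congr rfl fun b _ =>
      Finset.sum_congr rfl fun c _ => Finset.sum_congr rfl fun d _ => ?_
    have core : γ (c + d - b - a + x)
        = γ d * γ c * (starRingEnd ℂ) (γ b) * (starRingEnd ℂ) (γ a) * γ x := by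
      have hy : c + d - b - a + x = ((((d + c) + (-b)) + (-a)) + x) := by abel
      rw [hy]
      simp only [AddChar.map_add_eq_mul, AddChar.map_neg_eq_conj]
    rw [core]; ring
  rw [Finset.sum_congr rfl (fun γ _ => expand γ)]
  rw [Finset.sum_comm]
  simp only [Finset.mul_sum]
  refine Finset.sum_congr rfl fun a _ => ?_
  rw [Finset.sum_comm]
  refine Finset.sum_congr rfl fun b _ => ?_
  rw [Finset.sum_comm]
  refine Finset.sum_congr rfl fun c _ => ?_
  rw [Finset.sum_comm]
  refine Finset.sum_congr rfl fun d _ => ?_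
  rw [AddChar.sum_apply_eq_ite]
  simp only [mul_ite, mul_one, mul_zero]

/-- Cauchy–Schwarz: `|A|⁴ ≤ |A+A| · E(A)`. -/
lemma BCenergy (A : Finset G) :
    (A.card : ℝ)^4 ≤ ((A + A).card : ℝ) *
      ∑ a ∈ A, ∑ b ∈ A, ∑ c ∈ A, ∑ d ∈ A, (if c + d - b - a = (0:G) then (1:ℝ) else 0) := by
  classical
  set w : G → ℝ := fun s => ∑ c ∈ A, ∑ d ∈ A, if c + d = s then (1:ℝ) else 0 with hw
  have cond : ∀ (a b c d : G), (c + d - b - a = (0:G)) = (c + d = b + a) := by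
    intro a b c d
    rw [sub_sub, sub_eq_zero]
  have he : ∑ a ∈ A, ∑ b ∈ A, ∑ c ∈ A, ∑ d ∈ A, (if c + d - b - a = (0:G) then (1:ℝ) else 0)
      = ∑ a ∈ A, ∑ b ∈ A, w (b + a) := by
    refine Finset.sum_congr rfl fun a _ => Finset.sum_congr rfl fun b _ => ?_
    rw [hw]
    refine Finset.sum_congr rfl fun c _ => Finset.sum_congr rfl fun d _ => ?_
    simp only [sub_sub, sub_eq_zero]
  have hsum : ∑ s ∈ A + A, w s = (A.card : ℝ)^2 := by
    rw [hw, Finset.sum_comm]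
    have : ∀ c ∈ A, ∑ s ∈ A + A, ∑ d ∈ A, (if c + d = s then (1:ℝ) else 0)
        = (A.card : ℝ) := by
      intro c hc
      rw [Finset.sum_comm]
      have inner : ∀ d ∈ A, ∑ s ∈ A + A, (if c + d = s then (1:ℝ) else 0) = 1 := by
        intro d hd
        rw [Finset.sum_ite_eq, if_pos (Finset.add_mem_add hc hd)]
      rw [Finset.sum_congr rfl inner, Finset.sum_const, nsmul_eq_mul, mul_one]
    rw [Finset.sum_congr rfl this, Finset.sum_const, nsmul_eq_mul, sq]
  have hsq : ∑ a ∈ A, ∑ b ∈ A, w (b + a) = ∑ s ∈ A + A, w s * w s := by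
    have hab : ∀ a ∈ A, ∀ b ∈ A, w (b + a) = ∑ s ∈ A + A, (if b + a = s then w s else 0) := by
      intro a ha b hb
      rw [Finset.sum_ite_eq, if_pos (Finset.add_mem_add hb ha)]
    calc ∑ a ∈ A, ∑ b ∈ A, w (b + a)
        = ∑ a ∈ A, ∑ b ∈ A, ∑ s ∈ A + A, (if b + a = s then w s else 0) := by
          refine Finset.sum_congr rfl fun a ha => Finset.sum_congr rfl fun b hb => hab a ha b hb
      _ = ∑ s ∈ A + A, ∑ a ∈ A, ∑ b ∈ A, (if b + a = s then w s else 0) := by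
          have hswap : ∀ a ∈ A, (∑ b ∈ A, ∑ s ∈ A + A, (if b + a = s then w s else 0))
              = ∑ s ∈ A + A, ∑ b ∈ A, (if b + a = s then w s else 0) := fun a _ =>
            Finset.sum_comm
          rw [Finset.sum_congr rfl hswap, Finset.sum_comm]
      _ = ∑ s ∈ A + A, w s * w s := by
          refine Finset.sum_congr rfl fun s _ => ?_
          have h1 : ∀ a ∈ A, ∀ b ∈ A, (if b + a = s then w s else 0)
              = (if b + a = s then (1:ℝ) else 0) * w s := by
            intros a _ b _; split_ifs <;> simp
          calc ∑ a ∈ A, ∑ b ∈ A, (if b + a = s then w s else 0)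
              = ∑ a ∈ A, ∑ b ∈ A, (if b + a = s then (1:ℝ) else 0) * w s :=
                Finset.sum_congr rfl fun a ha => Finset.sum_congr rfl fun b hb => h1 a ha b hb
            _ = (∑ a ∈ A, ∑ b ∈ A, (if b + a = s then (1:ℝ) else 0)) * w s := by
                simp only [← Finset.sum_mul]
            _ = w s * w s := by
                rw [Finset.sum_comm, hw]
  calc (A.card : ℝ)^4 = (∑ s ∈ A + A, w s)^2 := by rw [hsum]; ring
    _ ≤ ((A + A).card : ℝ) * ∑ s ∈ A + A, w s ^ 2 := by
        exact_mod_cast sq_sum_le_card_mul_sum_sq (s := A + A) (f := w)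
    _ = ((A + A).card : ℝ) *
        ∑ a ∈ A, ∑ b ∈ A, ∑ c ∈ A, ∑ d ∈ A, (if c + d - b - a = (0:G) then (1:ℝ) else 0) := by
        rw [he, hsq]
        congr 1
        exact Finset.sum_congr rfl fun s _ => sq (w s)

lemma BCspan (S Λ : Finset (AddChar G ℂ)) (hΛS : Λ ⊆ S) (hdiss : BCDiss Λ)
    (hmax : ∀ Λ' ⊆ S, BCDiss Λ' → Λ'.card ≤ Λ.card) (γ : AddChar G ℂ) (hγ : γ ∈ S) :
    ∃ P Q : Finset (AddChar G ℂ), P ⊆ Λ ∧ Q ⊆ Λ ∧ Disjoint P Q ∧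
      γ = (∏ l ∈ P, l) * (∏ l ∈ Q, l)⁻¹ := by
  classical
  by_cases hγΛ : γ ∈ Λ
  · exact ⟨{γ}, ∅, Finset.singleton_subset_iff.2 hγΛ, Finset.empty_subset _,
      Finset.disjoint_empty_right _, by simp⟩
  have hnd : ¬ BCDiss (insert γ Λ) := by
    intro hd
    have hcard := hmax (insert γ Λ) (Finset.insert_subset hγ hΛS) hd
    rw [Finset.card_insert_of_notMem hγΛ] at hcard
    omega
  rw [BCDiss] at hnd
  push_neg at hnd
  obtain ⟨P, hP, Q, hQ, hprod, hPQ⟩ := hnd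
  have hdisj : Disjoint (P \ Q) (Q \ P) := disjoint_sdiff_sdiff
  have hprod' : (∏ l ∈ P \ Q, l) = ∏ l ∈ Q \ P, l := by
    have h1 : (∏ l ∈ P \ Q, l) * (∏ l ∈ P ∩ Q, l) = ∏ l ∈ P, l := by
      rw [← Finset.sdiff_inter_self_left, Finset.prod_sdiff Finset.inter_subset_left]
    have h2 : (∏ l ∈ Q \ P, l) * (∏ l ∈ P ∩ Q, l) = ∏ l ∈ Q, l := by
      rw [Finset.inter_comm, ← Finset.sdiff_inter_self_left,
        Finset.prod_sdiff Finset.inter_subset_left]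
    have := h1.trans (hprod.trans h2.symm)
    exact mul_right_cancel this
  have hne' : P \ Q ≠ Q \ P := by
    intro h
    apply hPQ
    have hPe : P \ Q = ∅ := by
      have h2 : Disjoint (P \ Q) (P \ Q) := by
        nth_rewrite 2 [h]
        exact hdisj
      simpa using h2
    have hQe : Q \ P = ∅ := h ▸ hPe
    exact Finset.Subset.antisymm (Finset.sdiff_eq_empty_iff_subset.1 hPe)
      (Finset.sdiff_eq_empty_iff_subset.1 hQe)
  have hsubP : ∀ l ∈ P \ Q, l = γ ∨ l ∈ Λ := fun l hl =>
    Finset.mem_insert.1 (hP (Finset.sdiff_subset hl))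
  have hsubQ : ∀ l ∈ Q \ P, l = γ ∨ l ∈ Λ := fun l hl =>
    Finset.mem_insert.1 (hQ (Finset.sdiff_subset hl))
  by_cases hγP : γ ∈ P \ Q
  · have hQ'Λ : Q \ P ⊆ Λ := by
      intro l hl
      rcases hsubQ l hl with h | h
      · exact absurd (h ▸ hl) (Finset.disjoint_left.1 hdisj hγP)
      · exact h
    have hP'Λ : (P \ Q).erase γ ⊆ Λ := by
      intro l hl
      rcases hsubP l (Finset.erase_subset _ _ hl) with h | h
      · exact absurd h (Finset.ne_of_mem_erase hl)
      · exact h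
    refine ⟨Q \ P, (P \ Q).erase γ, hQ'Λ, hP'Λ, ?_, ?_⟩
    · exact (hdisj.symm).mono_right (Finset.erase_subset _ _)
    · rw [eq_mul_inv_iff_mul_eq]
      rw [mul_comm]
      calc (∏ l ∈ (P \ Q).erase γ, l) * γ = γ * ∏ l ∈ (P \ Q).erase γ, l := mul_comm _ _
        _ = ∏ l ∈ P \ Q, l := Finset.mul_prod_erase _ (fun l => l) hγP
        _ = ∏ l ∈ Q \ P, l := hprod'
  by_cases hγQ : γ ∈ Q \ P
  · have hP'Λ : P \ Q ⊆ Λ := by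
      intro l hl
      rcases hsubP l hl with h | h
      · exact absurd hγQ (Finset.disjoint_left.1 hdisj (h ▸ hl))
      · exact h
    have hQ'Λ : (Q \ P).erase γ ⊆ Λ := by
      intro l hl
      rcases hsubQ l (Finset.erase_subset _ _ hl) with h | h
      · exact absurd h (Finset.ne_of_mem_erase hl)
      · exact h
    refine ⟨P \ Q, (Q \ P).erase γ, hP'Λ, hQ'Λ, ?_, ?_⟩
    · exact hdisj.mono_right (Finset.erase_subset _ _)
    · rw [eq_mul_inv_iff_mul_eq]
      rw [mul_comm]
      calc (∏ l ∈ (Q \ P).erase γ, l) * γ = γ * ∏ l ∈ (Q \ P).erase γ, l := mul_comm _ _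
        _ = ∏ l ∈ Q \ P, l := Finset.mul_prod_erase _ (fun l => l) hγQ
        _ = ∏ l ∈ P \ Q, l := hprod'.symm
  · exfalso
    have hP'Λ : P \ Q ⊆ Λ := fun l hl => (hsubP l hl).resolve_left (fun h => hγP (h ▸ hl))
    have hQ'Λ : Q \ P ⊆ Λ := fun l hl => (hsubQ l hl).resolve_left (fun h => hγQ (h ▸ hl))
    exact hne' (hdiss _ hP'Λ _ hQ'Λ hprod')

lemma BCcos (Λ P Q : Finset (AddChar G ℂ)) (hP : P ⊆ Λ) (hQ : Q ⊆ Λ) (hdisj : Disjoint P Q)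
    (γ : AddChar G ℂ) (hγ : γ = (∏ l ∈ P, l) * (∏ l ∈ Q, l)⁻¹) (x : G)
    (harg : ∑ l ∈ Λ, |(l x).arg| ≤ Real.pi / 3) :
    (1:ℝ)/2 ≤ (γ x).re := by
  classical
  have hval : ∀ l : AddChar G ℂ, l x = Complex.exp (((l x).arg : ℂ) * Complex.I) := by
    intro l
    have h1 : ‖l x‖ = 1 := by
      rw [AddChar.norm_apply]
    nth_rewrite 1 [← Complex.norm_mul_exp_arg_mul_I (l x)]
    rw [h1]; simp
  have hprodP : (∏ l ∈ P, l) x = Complex.exp (((∑ l ∈ P, (l x).arg : ℝ) : ℂ) * Complex.I) := by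
    rw [BCprodApply]
    rw [Finset.prod_congr rfl fun l _ => hval l, ← Complex.exp_sum, ← Finset.sum_mul]
    push_cast
    rfl
  have hprodQ : (∏ l ∈ Q, l) x = Complex.exp (((∑ l ∈ Q, (l x).arg : ℝ) : ℂ) * Complex.I) := by
    rw [BCprodApply]
    rw [Finset.prod_congr rfl fun l _ => hval l, ← Complex.exp_sum, ← Finset.sum_mul]
    push_cast
    rfl
  have hγx : γ x = Complex.exp ((((∑ l ∈ P, (l x).arg) - ∑ l ∈ Q, (l x).arg : ℝ) : ℂ) * Complex.I) := by
    rw [hγ, AddChar.mul_apply, AddChar.inv_apply', hprodP, hprodQ, ← Complex.exp_neg,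
      ← Complex.exp_add]
    congr 1
    push_cast
    ring
  set θ : ℝ := (∑ l ∈ P, (l x).arg) - ∑ l ∈ Q, (l x).arg with hθ
  have hre : (γ x).re = Real.cos θ := by
    rw [hγx, Complex.exp_ofReal_mul_I_re]
  have habs : |θ| ≤ Real.pi / 3 := by
    have h1 : |θ| ≤ (∑ l ∈ P, |(l x).arg|) + ∑ l ∈ Q, |(l x).arg| := by
      refine (abs_sub _ _).trans ?_
      gcongr <;> exact Finset.abs_sum_le_sum_abs _ _
    have h2 : (∑ l ∈ P, |(l x).arg|) + ∑ l ∈ Q, |(l x).arg|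
        = ∑ l ∈ P ∪ Q, |(l x).arg| := (Finset.sum_union hdisj).symm
    have h3 : ∑ l ∈ P ∪ Q, |(l x).arg| ≤ ∑ l ∈ Λ, |(l x).arg| :=
      Finset.sum_le_sum_of_subset_of_nonneg (Finset.union_subset hP hQ)
        (fun _ _ _ => abs_nonneg _)
    linarith
  rw [hre, ← Real.cos_abs]
  have := Real.cos_le_cos_of_nonneg_of_le_pi (abs_nonneg θ)
    (by linarith [Real.pi_pos] : Real.pi / 3 ≤ Real.pi) habs
  rw [Real.cos_pi_div_three] at this
  linarith

end BCAux

/-- **Bogolyubov–Chang.** If `|A + A| ≤ K|A|` then `2A - 2A` contains a Bohr set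
`B(Γ, δ)` with `|Γ| ≤ 8K log(1/α)` and `δ ≥ (48K log(1/α))⁻¹`, where `α = |A|/|G|`. -/
theorem stmt10 {G : Type*} [AddCommGroup G] [Fintype G] [DecidableEq G]
    (A : Finset G) (hA : A.Nonempty) (K : ℝ)
    (hK : ((A + A).card : ℝ) ≤ K * A.card)
    (hα : (A.card : ℝ) < Fintype.card G) :
    ∃ (Γ : Finset (AddChar G ℂ)) (δ : ℝ),
      (Γ.card : ℝ) ≤ 8 * K * Real.log ((Fintype.card G : ℝ) / A.card) ∧
      (48 * K * Real.log ((Fintype.card G : ℝ) / A.card))⁻¹ ≤ δ ∧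
      {x : G | ∀ γ ∈ Γ, (2 * Real.pi)⁻¹ * |Complex.arg (γ x)| ≤ δ} ⊆
        ↑(A + A - A - A) := by
  classical
  have hA0 : (0:ℝ) < A.card := by exact_mod_cast Finset.card_pos.2 hA
  have hN0 : (0:ℝ) < Fintype.card G := lt_trans hA0 hα
  have hAA : ((A.card : ℝ)) ≤ ((A + A).card : ℝ) := by
    exact_mod_cast Finset.card_le_card_add_right hA
  have hK1 : (1:ℝ) ≤ K := by
    nlinarith
  have hK0 : (0:ℝ) < K := lt_of_lt_of_le one_pos hK1
  set L : ℝ := Real.log ((Fintype.card G : ℝ) / A.card) with hLdef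
  have hL0 : (0:ℝ) < L := Real.log_pos (by rw [lt_div_iff₀ hA0]; linarith)
  set ρ : ℝ := (2 * Real.sqrt K)⁻¹ with hρdef
  have hsqK : (0:ℝ) < Real.sqrt K := Real.sqrt_pos.2 hK0
  have hρ0 : (0:ℝ) < ρ := by positivity
  have hρsq : ρ^2 = (4*K)⁻¹ := by
    have h2 : (2 * Real.sqrt K)^2 = 4 * K := by
      rw [mul_pow, Real.sq_sqrt hK0.le]; ring
    rw [hρdef, inv_pow, h2]
  set F : AddChar G ℂ → ℂ := fun γ => ∑ y ∈ A, γ y with hFdef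
  set Spec : Finset (AddChar G ℂ) := Finset.univ.filter (fun γ => ρ * A.card ≤ ‖F γ‖)
    with hSpecdef
  -- maximal dissociated subset of the spectrum
  obtain ⟨Λ, hΛD, hΛmax⟩ := Finset.exists_max_image (Spec.powerset.filter BCDiss)
    Finset.card ⟨∅, Finset.mem_filter.2 ⟨Finset.empty_mem_powerset _, BCDiss_empty⟩⟩
  have hΛSpec : Λ ⊆ Spec := Finset.mem_powerset.1 (Finset.mem_filter.1 hΛD).1
  have hΛdiss : BCDiss Λ := (Finset.mem_filter.1 hΛD).2
  have hmax : ∀ Λ' ⊆ Spec, BCDiss Λ' → Λ'.card ≤ Λ.card := fun Λ' h1 h2 =>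
    hΛmax Λ' (Finset.mem_filter.2 ⟨Finset.mem_powerset.2 h1, h2⟩)
  have hspec : ∀ l ∈ Λ, ρ * A.card ≤ ‖∑ y ∈ A, l y‖ := fun l hl =>
    (Finset.mem_filter.1 (hΛSpec hl)).2
  -- Chang's bound
  have hchang : (Λ.card : ℝ) * ρ^2 ≤ 2 * L := by
    refine BCchang A hA ρ hρ0 hα Λ (fun θ => ?_) hspec
    exact BCriesz Λ (fun U hU hUne θ' => BCsum_prod_re Λ U hΛdiss hU hUne θ') θ ρ
  have hm : (Λ.card : ℝ) ≤ 8 * K * L := by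
    rw [hρsq] at hchang
    have h4K : (0:ℝ) < 4 * K := by linarith
    have h5 := mul_le_mul_of_nonneg_right hchang h4K.le
    have h6 : (Λ.card:ℝ) * (4*K)⁻¹ * (4*K) = Λ.card := by field_simp
    rw [h6] at h5
    have h7 : 2 * L * (4*K) = 8 * K * L := by ring
    linarith
  refine ⟨Λ, (48 * K * L)⁻¹, hm, le_refl _, ?_⟩
  intro x hx
  simp only [Set.mem_setOf_eq] at hx
  -- sum of arguments bound
  have hargsum : ∑ l ∈ Λ, |(l x).arg| ≤ Real.pi / 3 := by
    have hd0 : (0:ℝ) < 48 * K * L := by positivity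
    have h1 : ∀ l ∈ Λ, |(l x).arg| ≤ 2 * Real.pi * (48 * K * L)⁻¹ := by
      intro l hl
      have h2 := hx l hl
      rw [inv_mul_le_iff₀ (by positivity : (0:ℝ) < 2 * Real.pi)] at h2
      exact h2
    calc ∑ l ∈ Λ, |(l x).arg| ≤ ∑ _l ∈ Λ, 2 * Real.pi * (48 * K * L)⁻¹ :=
          Finset.sum_le_sum h1
      _ = (Λ.card : ℝ) * (2 * Real.pi * (48 * K * L)⁻¹) := by
          rw [Finset.sum_const, nsmul_eq_mul]
      _ ≤ (8 * K * L) * (2 * Real.pi * (48 * K * L)⁻¹) := by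
          have : (0:ℝ) ≤ 2 * Real.pi * (48 * K * L)⁻¹ := by positivity
          nlinarith [hm]
      _ = Real.pi / 3 := by
          field_simp
          ring
  -- real part lower bound on the spectrum
  have hre : ∀ γ ∈ Spec, (1:ℝ)/2 ≤ (γ x).re := by
    intro γ hγ
    obtain ⟨P, Q, hP, hQ, hdisj, heq⟩ := BCspan Spec Λ hΛSpec hΛdiss hmax γ hγ
    exact BCcos Λ P Q hP hQ hdisj γ heq x hargsum
  -- positivity of the convolution
  set W : AddChar G ℂ → ℝ := fun γ => ‖F γ‖^2 with hWdef
  -- identities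
  have hparse : ∑ γ : AddChar G ℂ, W γ = (Fintype.card G : ℝ) * A.card := BCparseval A
  set e : ℝ := ∑ a ∈ A, ∑ b ∈ A, ∑ c ∈ A, ∑ d ∈ A,
      (if c + d - b - a = (0:G) then (1:ℝ) else 0) with hedef
  have henergy : (A.card : ℝ)^4 ≤ ((A + A).card : ℝ) * e := BCenergy A
  have hWsum : ∑ γ : AddChar G ℂ, (W γ)^2 = (Fintype.card G : ℝ) * e := by
    have h0 := BCmaster A 0
    simp only [AddChar.map_zero_eq_one, mul_one, add_zero] at h0
    have hL2 : ((∑ γ : AddChar G ℂ, (W γ)^2 : ℝ) : ℂ)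
        = ∑ γ : AddChar G ℂ, ((‖∑ a ∈ A, γ a‖^2 : ℝ) : ℂ)^2 := by
      rw [Complex.ofReal_sum]
      refine Finset.sum_congr rfl fun γ _ => ?_
      simp only [hWdef, hFdef]
      push_cast
      ring
    have hR2 : (((Fintype.card G : ℝ) * e : ℝ) : ℂ) = (Fintype.card G : ℂ) *
        (∑ a ∈ A, ∑ b ∈ A, ∑ c ∈ A, ∑ d ∈ A,
          if c + d - b - a = (0:G) then (1:ℂ) else 0) := by
      rw [Complex.ofReal_mul]
      congr 1
      rw [hedef]
      push_cast [apply_ite Complex.ofReal]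
      rfl
    exact_mod_cast hL2.trans (h0.trans hR2.symm)
  -- the real part of the master identity at x
  set eC : ℂ := ∑ a ∈ A, ∑ b ∈ A, ∑ c ∈ A, ∑ d ∈ A,
      (if c + d - b - a + x = 0 then (1:ℂ) else 0) with heCdef
  have hmaster := BCmaster A x
  have hRT : (∑ γ : AddChar G ℂ, ((‖∑ a ∈ A, γ a‖^2 : ℝ) : ℂ)^2 * γ x).re
      = ∑ γ : AddChar G ℂ, (W γ)^2 * (γ x).re := by
    rw [Complex.re_sum]
    refine Finset.sum_congr rfl fun γ _ => ?_
    rw [← Complex.ofReal_pow, Complex.re_ofReal_mul]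
  obtain ⟨RT, hRTdef⟩ : ∃ RT : ℝ, RT = ∑ γ : AddChar G ℂ, (W γ)^2 * (γ x).re := ⟨_, rfl⟩
  -- RT > 0
  have hWpos : ∀ γ : AddChar G ℂ, (0:ℝ) ≤ (W γ)^2 := fun γ => sq_nonneg _
  obtain ⟨B, hBdef⟩ : ∃ B : ℝ, B = ∑ γ ∈ Finset.univ.filter
      (fun γ => ¬ (ρ * A.card ≤ ‖F γ‖)), (W γ)^2 := ⟨_, rfl⟩
  obtain ⟨T, hTdef⟩ : ∃ T : ℝ, T = ∑ γ : AddChar G ℂ, (W γ)^2 := ⟨_, rfl⟩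
  have hsplit : RT = (∑ γ ∈ Spec, (W γ)^2 * (γ x).re) +
      ∑ γ ∈ Finset.univ.filter (fun γ => ¬ (ρ * A.card ≤ ‖F γ‖)), (W γ)^2 * (γ x).re := by
    rw [hRTdef, hSpecdef, ← Finset.sum_filter_add_sum_filter_not Finset.univ
      (fun γ => ρ * A.card ≤ ‖F γ‖)]
  have hTsplit : T = (∑ γ ∈ Spec, (W γ)^2) + B := by
    rw [hTdef, hBdef, hSpecdef, ← Finset.sum_filter_add_sum_filter_not Finset.univ
      (fun γ => ρ * A.card ≤ ‖F γ‖)]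
  have hSpeclb : (∑ γ ∈ Spec, (W γ)^2) / 2 ≤ ∑ γ ∈ Spec, (W γ)^2 * (γ x).re := by
    rw [div_eq_mul_inv, Finset.sum_mul]
    refine Finset.sum_le_sum fun γ hγ => ?_
    have h1 := hre γ hγ
    nlinarith [hWpos γ]
  have hreabs : ∀ γ : AddChar G ℂ, -(1:ℝ) ≤ (γ x).re := by
    intro γ
    have h1 : |(γ x).re| ≤ 1 := by
      calc |(γ x).re| ≤ ‖γ x‖ := Complex.abs_re_le_norm _
        _ = 1 := AddChar.norm_apply _ _
    linarith [abs_le.1 h1]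
  have hTaillb : -B ≤ ∑ γ ∈ Finset.univ.filter (fun γ => ¬ (ρ * A.card ≤ ‖F γ‖)),
      (W γ)^2 * (γ x).re := by
    rw [hBdef, ← Finset.sum_neg_distrib]
    refine Finset.sum_le_sum fun γ _ => ?_
    nlinarith [hWpos γ, hreabs γ]
  have hBub : B ≤ (ρ * A.card)^2 * ((Fintype.card G : ℝ) * A.card) := by
    rw [← hparse]
    calc B ≤ ∑ γ ∈ Finset.univ.filter (fun γ => ¬ (ρ * A.card ≤ ‖F γ‖)),
          (ρ * A.card)^2 * W γ := by
          rw [hBdef]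
          refine Finset.sum_le_sum fun γ hγ => ?_
          have h1 : ‖F γ‖ < ρ * A.card := lt_of_not_ge (Finset.mem_filter.1 hγ).2
          have h2 : (0:ℝ) ≤ ‖F γ‖ := norm_nonneg _
          have hw : W γ = ‖F γ‖^2 := rfl
          rw [hw]
          have h3 : ‖F γ‖^2 ≤ (ρ * A.card)^2 := by nlinarith
          nlinarith [h3, sq_nonneg (‖F γ‖)]
      _ ≤ ∑ γ : AddChar G ℂ, (ρ * A.card)^2 * W γ := by
          refine Finset.sum_le_sum_of_subset_of_nonneg (Finset.filter_subset _ _) ?_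
          intro γ _ _
          have : (0:ℝ) ≤ W γ := sq_nonneg _
          positivity
      _ = (ρ * A.card)^2 * ∑ γ : AddChar G ℂ, W γ := by rw [Finset.mul_sum]
  have hTlb : (Fintype.card G : ℝ) * (A.card:ℝ)^3 ≤ T * K := by
    have h1 : (Fintype.card G : ℝ) * (A.card:ℝ)^4 ≤ T * (((A+A).card : ℝ)) := by
      rw [hTdef, hWsum]
      nlinarith [henergy, hN0.le]
    have h2 : T * (((A+A).card : ℝ)) ≤ T * (K * A.card) := by
      have hT0 : (0:ℝ) ≤ T := by
        rw [hTdef]; exact Finset.sum_nonneg fun γ _ => hWpos γ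
      nlinarith
    have h3 : (Fintype.card G : ℝ) * (A.card:ℝ)^4 ≤ (T * K) * A.card := by nlinarith
    have h4 : ((Fintype.card G : ℝ) * (A.card:ℝ)^3) * A.card ≤ (T * K) * A.card := by
      nlinarith
    exact le_of_mul_le_mul_right h4 hA0
  -- combine to get RT > 0
  have hBub2 : B * (4 * K) ≤ (Fintype.card G : ℝ) * (A.card:ℝ)^3 := by
    have h4K : (0:ℝ) < 4 * K := by linarith
    have hpow : (ρ * A.card)^2 * ((Fintype.card G : ℝ) * A.card) * (4*K)
        = (Fintype.card G : ℝ) * (A.card:ℝ)^3 := by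
      rw [mul_pow, hρsq]
      field_simp
    calc B * (4*K) ≤ ((ρ * A.card)^2 * ((Fintype.card G : ℝ) * A.card)) * (4*K) :=
          mul_le_mul_of_nonneg_right hBub h4K.le
      _ = (Fintype.card G : ℝ) * (A.card:ℝ)^3 := hpow
  have hRTlb : T/2 - (3/2) * B ≤ RT := by
    have h3 : ∑ γ ∈ Spec, (W γ)^2 = T - B := by linarith [hTsplit]
    rw [hsplit]
    linarith [hSpeclb, hTaillb, h3]
  have hRTpos : (0:ℝ) < RT := by
    have h8K : (0:ℝ) < 8 * K := by linarith
    have hmul := mul_le_mul_of_nonneg_right hRTlb h8K.le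
    have hNa3 : (0:ℝ) < (Fintype.card G : ℝ) * (A.card:ℝ)^3 := mul_pos hN0 (pow_pos hA0 3)
    have h2 : (Fintype.card G : ℝ) * (A.card:ℝ)^3 ≤ RT * (8*K) := by
      calc (Fintype.card G : ℝ) * (A.card:ℝ)^3
          = 4*((Fintype.card G : ℝ) * (A.card:ℝ)^3)
            - 3*((Fintype.card G : ℝ) * (A.card:ℝ)^3) := by ring
        _ ≤ 4*(T*K) - 3*(B*(4*K)) := by linarith [hTlb, hBub2]
        _ = (T/2 - (3/2)*B)*(8*K) := by ring
        _ ≤ RT*(8*K) := hmul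
    by_contra h
    push_neg at h
    have h3 : RT * (8*K) ≤ 0 := mul_nonpos_of_nonpos_of_nonneg h h8K.le
    linarith
  -- extract a quadruple
  have hRe2 : RT = ((Fintype.card G : ℂ) *
      (∑ a ∈ A, ∑ b ∈ A, ∑ c ∈ A, ∑ d ∈ A,
        (if c + d - b - a + x = 0 then (1:ℂ) else 0))).re := by
    rw [hRTdef, ← hRT, hmaster]
  have hne : (∑ a ∈ A, ∑ b ∈ A, ∑ c ∈ A, ∑ d ∈ A,
      (if c + d - b - a + x = 0 then (1:ℂ) else 0)) ≠ 0 := by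
    intro h
    rw [h, mul_zero] at hRe2
    simp at hRe2
    rw [hRe2] at hRTpos
    exact lt_irrefl _ hRTpos
  obtain ⟨p, hp, hne⟩ := Finset.exists_ne_zero_of_sum_ne_zero hne
  obtain ⟨q, hq, hne⟩ := Finset.exists_ne_zero_of_sum_ne_zero hne
  obtain ⟨r, hr, hne⟩ := Finset.exists_ne_zero_of_sum_ne_zero hne
  obtain ⟨s, hs, hne⟩ := Finset.exists_ne_zero_of_sum_ne_zero hne
  have hcond : r + s - q - p + x = 0 := by
    by_contra h
    rw [if_neg h] at hne
    exact hne rfl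
  have hxeq : x = p + q - r - s := by
    have h2 : x = -(r + s - q - p) := by
      rw [eq_neg_iff_add_eq_zero, add_comm]
      exact hcond
    rw [h2]
    abel
  rw [hxeq]
  have hmem : p + q - r - s ∈ A + A - A - A :=
    Finset.sub_mem_sub (Finset.sub_mem_sub (Finset.add_mem_add hp hq) hr) hs
  exact_mod_cast hmem
end

section
/- Let A be a finite subset of 𝔽₂^m (for some m) with |A + A| ≤ K|A|. Then there exists an integer m' and a subset A' ⊆ 𝔽₂^{m'} with 2^{m'} ≤ K⁴|A| such that A is Freiman 2-isomorphic to A'. -/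
open scoped Pointwise

open Finset Set Module

private lemma char2_add_self' {m : ℕ} (v : Fin m → ZMod 2) : v + v = 0 := by
  funext i
  exact CharTwo.add_self_eq_zero _

set_option maxHeartbeats 1000000 in
/-- A subset of `𝔽₂^m` with doubling `K` has a Freiman 2-model of size at most `K⁴|A|`. -/
theorem stmt14 (m : ℕ) (A : Finset (Fin m → ZMod 2)) (hA : A.Nonempty) (K : ℝ)
    (hK : ((A + A).card : ℝ) ≤ K * A.card) :
    ∃ (m' : ℕ) (A' : Set (Fin m' → ZMod 2)) (φ : (Fin m → ZMod 2) → (Fin m' → ZMod 2)),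
      ((2 : ℝ) ^ m' ≤ K ^ 4 * A.card) ∧ IsAddFreimanIso 2 (A : Set (Fin m → ZMod 2)) A' φ := by
  classical
  set S : Finset (Fin m → ZMod 2) := A + A + A + A with hS
  obtain ⟨a0, ha0⟩ := hA
  have hmemS : ∀ a1 ∈ A, ∀ a2 ∈ A, ∀ a3 ∈ A, ∀ a4 ∈ A, a1 + a2 + a3 + a4 ∈ S := by
    intro a1 h1 a2 h2 a3 h3 a4 h4
    exact add_mem_add (add_mem_add (add_mem_add h1 h2) h3) h4
  have hzeroS : (0 : Fin m → ZMod 2) ∈ S := by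
    have h := hmemS _ ha0 _ ha0 _ ha0 _ ha0
    have h0 : a0 + a0 + a0 + a0 = 0 := by
      rw [char2_add_self' a0, zero_add, char2_add_self']
    rwa [h0] at h
  -- choose a subspace W maximal among those meeting S only in 0
  set P : Set (Submodule (ZMod 2) (Fin m → ZMod 2)) := {W | ∀ s ∈ S, s ∈ W → s = 0} with hP
  have hPne : P.Nonempty := ⟨⊥, fun s _ hs => hs⟩
  obtain ⟨W, hWP, hWmax⟩ := Set.Finite.exists_maximalFor
    (fun W : Submodule (ZMod 2) (Fin m → ZMod 2) => (Nat.card W)) P (Set.toFinite P) hPne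
  -- the quotient
  have : Module.Finite (ZMod 2) ((Fin m → ZMod 2) ⧸ W) :=
    Module.Finite.of_surjective W.mkQ (Submodule.mkQ_surjective W)
  set m' := Module.finrank (ZMod 2) ((Fin m → ZMod 2) ⧸ W) with hm'
  let e : ((Fin m → ZMod 2) ⧸ W) ≃ₗ[ZMod 2] (Fin m' → ZMod 2) :=
    (Module.finBasis (ZMod 2) ((Fin m → ZMod 2) ⧸ W)).equivFun
  let L : (Fin m → ZMod 2) →ₗ[ZMod 2] (Fin m' → ZMod 2) := e.toLinearMap ∘ₗ W.mkQ
  -- key property: only trivial elements of S are killed by L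
  have hker : ∀ s ∈ S, L s = 0 → s = 0 := by
    intro s hs hLs
    have h1 : e (W.mkQ s) = 0 := hLs
    have h2 : W.mkQ s = 0 := by
      rwa [LinearEquiv.map_eq_zero_iff] at h1
    exact hWP s hs ((Submodule.Quotient.mk_eq_zero W).1 h2)
  -- key: quotient map is surjective from S onto the quotient
  have hsurj : ∀ q : (Fin m → ZMod 2) ⧸ W, ∃ s ∈ S, W.mkQ s = q := by
    intro q
    obtain ⟨x, rfl⟩ := Submodule.mkQ_surjective W q
    by_cases hx : x ∈ W
    · refine ⟨0, hzeroS, ?_⟩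
      simp only [map_zero]
      symm
      rwa [Submodule.mkQ_apply, Submodule.Quotient.mk_eq_zero]
    · set W' := W ⊔ Submodule.span (ZMod 2) {x} with hW'
      have hle : W ≤ W' := le_sup_left
      have hxW' : x ∈ W' := Submodule.mem_sup_right (Submodule.mem_span_singleton_self x)
      have hlt : W < W' := lt_of_le_of_ne hle (fun h => hx (h ▸ hxW'))
      have hW'notP : W' ∉ P := by
        intro hW'P
        have hcard : Nat.card W ≤ Nat.card W' :=
          Nat.card_le_card_of_injective (Submodule.inclusion hle)
            (Submodule.inclusion_injective hle)
        have hcardeq := le_antisymm hcard (hWmax hW'P hcard)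
        have hinj : Function.Injective (Submodule.inclusion hle) :=
          Submodule.inclusion_injective hle
        have hbij : Function.Bijective (Submodule.inclusion hle) :=
          (Nat.bijective_iff_injective_and_card (Submodule.inclusion hle)).2 ⟨hinj, hcardeq⟩
        have heq : W = W' := by
          refine le_antisymm hle fun y hy => ?_
          obtain ⟨⟨z, hz⟩, hz2⟩ := hbij.2 ⟨y, hy⟩
          have : z = y := congrArg Subtype.val hz2
          exact this ▸ hz
        exact hlt.ne heq
      simp only [hP, Set.mem_setOf_eq, not_forall] at hW'notP
      obtain ⟨s, hsS, hsW', hs0⟩ := hW'notP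
      obtain ⟨w, hw, y, hy, rfl⟩ := Submodule.mem_sup.1 hsW'
      obtain ⟨c, rfl⟩ := Submodule.mem_span_singleton.1 hy
      have hcall : ∀ d : ZMod 2, d = 0 ∨ d = 1 := by decide
      have hc := hcall c
      rcases hc with rfl | rfl
      · exact absurd (hWP _ hsS (by simpa using hw)) hs0
      · refine ⟨w + (1 : ZMod 2) • x, hsS, ?_⟩
        simp only [one_smul, Submodule.mkQ_apply]
        rw [Submodule.Quotient.mk_add, (Submodule.Quotient.mk_eq_zero W).2 hw, zero_add]
  -- cardinality bound via surjectivity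
  have hcardQ : Nat.card ((Fin m → ZMod 2) ⧸ W) ≤ S.card := by
    have hsurj2 : Function.Surjective (fun s : S => W.mkQ (s : Fin m → ZMod 2)) := by
      intro q
      obtain ⟨s, hs, hsq⟩ := hsurj q
      exact ⟨⟨s, hs⟩, hsq⟩
    calc Nat.card ((Fin m → ZMod 2) ⧸ W) ≤ Nat.card S :=
          Nat.card_le_card_of_surjective _ hsurj2
      _ = S.card := by simp [Nat.card_eq_fintype_card, Fintype.card_coe]
  have hQpow : Nat.card ((Fin m → ZMod 2) ⧸ W) = 2 ^ m' := by
    rw [Nat.card_congr e.toEquiv]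
    simp [Nat.card_eq_fintype_card]
  -- Plünnecke–Ruzsa: |S| ≤ K⁴|A|
  have hAne : A.Nonempty := ⟨a0, ha0⟩
  have hApos : (0 : ℝ) < A.card := by exact_mod_cast Finset.card_pos.2 hAne
  have hS4 : S = (4 : ℕ) • A := by
    rw [hS, succ_nsmul, succ_nsmul, succ_nsmul, one_nsmul]
  have hPR : ((S.card : ℝ)) ≤ K ^ 4 * A.card := by
    have h := Finset.pluennecke_ruzsa_inequality_nsmul_add hAne A 4
    rw [← hS4] at h
    have hq : ((S.card : ℝ)) ≤ (((A + A).card : ℝ) / A.card) ^ 4 * A.card := by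
      have h2 := (NNRat.cast_le (K := ℝ)).2 h
      push_cast at h2
      exact h2
    refine hq.trans ?_
    have hratio : ((A + A).card : ℝ) / A.card ≤ K := by
      rw [div_le_iff₀ hApos]; exact hK
    have hratio0 : (0 : ℝ) ≤ ((A + A).card : ℝ) / A.card := by positivity
    have hp := pow_le_pow_left₀ hratio0 hratio 4
    nlinarith
  have hbound : (2 : ℝ) ^ m' ≤ K ^ 4 * A.card := by
    have h2 : ((2 : ℕ) ^ m' : ℝ) ≤ (S.card : ℝ) := by
      exact_mod_cast hQpow ▸ hcardQ
    calc (2 : ℝ) ^ m' = ((2 : ℕ) ^ m' : ℝ) := by push_cast; ring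
      _ ≤ (S.card : ℝ) := h2
      _ ≤ K ^ 4 * A.card := hPR
  -- the Freiman iso
  refine ⟨m', L '' (A : Set (Fin m → ZMod 2)), L, hbound, ?_, ?_⟩
  · refine ⟨Set.mapsTo_image _ _, ?_, Set.surjOn_image _ _⟩
    intro a1 h1 a2 h2 hL
    have hz : L (a1 + a2) = 0 := by
      rw [map_add]
      rw [show L a1 = L a2 from hL]
      exact char2_add_self' _
    have h0 : a1 + a2 = 0 := by
      have hmem : a1 + a2 ∈ S := by
        have h := hmemS a1 h1 a2 h2 a0 ha0 a0 ha0
        rwa [add_assoc, char2_add_self', add_zero] at h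
      exact hker _ hmem hz
    have h := congrArg (· + a2) h0
    simpa [add_assoc, char2_add_self'] using h
  · intro s t hsA htA hs ht
    obtain ⟨a1, a2, rfl⟩ := Multiset.card_eq_two.1 hs
    obtain ⟨a3, a4, rfl⟩ := Multiset.card_eq_two.1 ht
    have h1 : a1 ∈ A := by
      have := hsA (show a1 ∈ ({a1, a2} : Multiset (Fin m → ZMod 2)) by simp); exact_mod_cast this
    have h2 : a2 ∈ A := by
      have := hsA (show a2 ∈ ({a1, a2} : Multiset (Fin m → ZMod 2)) by simp); exact_mod_cast this
    have h3 : a3 ∈ A := by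
      have := htA (show a3 ∈ ({a3, a4} : Multiset (Fin m → ZMod 2)) by simp); exact_mod_cast this
    have h4 : a4 ∈ A := by
      have := htA (show a4 ∈ ({a3, a4} : Multiset (Fin m → ZMod 2)) by simp); exact_mod_cast this
    simp only [Multiset.insert_eq_cons, Multiset.map_cons, Multiset.map_singleton,
      Multiset.sum_cons, Multiset.sum_singleton]
    constructor
    · intro h
      have hz : L (a1 + a2 + a3 + a4) = 0 := by
        rw [map_add, map_add, map_add, show (L a1 + L a2 : Fin m' → ZMod 2) = L a3 + L a4 from h]
        have hc := char2_add_self' (L a3 + L a4)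
        rw [← hc]
        abel
      have h0 : a1 + a2 + a3 + a4 = 0 := hker _ (hmemS _ h1 _ h2 _ h3 _ h4) hz
      calc a1 + a2 = a1 + a2 + ((a3 + a4) + (a3 + a4)) := by
            rw [char2_add_self', add_zero]
        _ = (a1 + a2 + a3 + a4) + (a3 + a4) := by abel
        _ = 0 + (a3 + a4) := by rw [h0]
        _ = a3 + a4 := zero_add _
    · intro h
      rw [← map_add, ← map_add, h]
end

section
/- Let A ⊆ 𝔽₂^m be finite with |A+A| ≤ K|A|, and suppose that m is minimal such that A is Freiman 2-isomorphic to a subset of 𝔽₂^m. If x ∈ 𝔽₂^m lies outside 2A - 2A, then any linear map φ : 𝔽₂^m → 𝔽₂^{m-1} with kernel {0, x} induces a Freiman 2-isomorphism on A; consequently 𝔽₂^m = 2A - 2A when m is minimal and 2^m > K⁴|A| is impossible. -/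
open scoped Pointwise

/-- If `A ⊆ 𝔽₂^m` has doubling `K` and `m` is minimal such that `A` is Freiman
2-isomorphic to a subset of `𝔽₂^m`, then: any linear map `φ : 𝔽₂^m → 𝔽₂^{m-1}` whose
kernel is `{0, x}` with `x ∉ 2A - 2A` induces a Freiman 2-isomorphism on `A`;
consequently `2A - 2A = 𝔽₂^m` and `2^m > K⁴|A|` is impossible. -/
theorem stmt15 (m : ℕ) (A : Finset (Fin m → ZMod 2)) (hA : A.Nonempty) (K : ℝ)
    (hK : ((A + A).card : ℝ) ≤ K * A.card)
    (hmin : ∀ m' < m, ¬ ∃ (A' : Set (Fin m' → ZMod 2))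
      (φ : (Fin m → ZMod 2) → (Fin m' → ZMod 2)),
        IsAddFreimanIso 2 (A : Set (Fin m → ZMod 2)) A' φ) :
    (∀ x : Fin m → ZMod 2, x ∉ A + A - A - A →
      ∀ φ : (Fin m → ZMod 2) →ₗ[ZMod 2] (Fin (m - 1) → ZMod 2),
        (LinearMap.ker φ : Set (Fin m → ZMod 2)) = {0, x} →
        IsAddFreimanIso 2 (A : Set (Fin m → ZMod 2)) (φ '' A) φ) ∧
    (A + A - A - A = (Finset.univ : Finset (Fin m → ZMod 2))) ∧
    ¬ (K ^ 4 * A.card < (2 : ℝ) ^ m) := by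
  have key : ∀ a ∈ A, ∀ b ∈ A, ∀ c ∈ A, ∀ d ∈ A,
      a + b - c - d ∈ A + A - A - A := fun a ha b hb c hc d hd =>
    Finset.sub_mem_sub (Finset.sub_mem_sub (Finset.add_mem_add ha hb) hc) hd
  -- Part 1
  have part1 : ∀ x : Fin m → ZMod 2, x ∉ A + A - A - A →
      ∀ φ : (Fin m → ZMod 2) →ₗ[ZMod 2] (Fin (m - 1) → ZMod 2),
        (LinearMap.ker φ : Set (Fin m → ZMod 2)) = {0, x} →
        IsAddFreimanIso 2 (A : Set (Fin m → ZMod 2)) (φ '' A) φ := by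
    intro x hx φ hker
    have hker' : ∀ y, φ y = 0 → y = 0 ∨ y = x := by
      intro y hy
      have : y ∈ (LinearMap.ker φ : Set (Fin m → ZMod 2)) := hy
      rw [hker] at this
      simpa using this
    rw [isAddFreimanIso_two]
    have hinj : Set.InjOn φ (A : Set (Fin m → ZMod 2)) := by
      intro a ha b hb hab
      have h0 : φ (a + b - b - b) = 0 := by
        simp only [map_sub, map_add, hab]; abel
      rcases hker' _ h0 with h | h
      · have h1 : a - b = 0 := by rw [← h]; abel
        exact sub_eq_zero.1 h1
      · exact absurd (h ▸ key a ha b hb b hb b hb) hx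
    refine ⟨⟨Set.mapsTo_image _ _, hinj, Set.surjOn_image _ _⟩, ?_⟩
    intro a ha b hb c hc d hd
    constructor
    · intro h
      have h0 : φ (a + b - c - d) = 0 := by
        simp only [map_sub, map_add, h]; abel
      rcases hker' _ h0 with h' | h'
      · have h1 : a + b - (c + d) = 0 := by rw [← h']; abel
        exact sub_eq_zero.1 h1
      · exact absurd (h' ▸ key a ha b hb c hc d hd) hx
    · intro h
      have : φ (a + b) = φ (c + d) := by rw [h]
      simpa [map_add] using this
  -- Part 2
  obtain ⟨a₀, ha₀⟩ := hA
  have h0mem : (0 : Fin m → ZMod 2) ∈ A + A - A - A := by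
    have := key a₀ ha₀ a₀ ha₀ a₀ ha₀ a₀ ha₀
    simpa using this
  have part2 : A + A - A - A = (Finset.univ : Finset (Fin m → ZMod 2)) := by
    by_contra hne
    obtain ⟨x, hx⟩ : ∃ x : Fin m → ZMod 2, x ∉ A + A - A - A := by
      by_contra h
      push_neg at h
      exact hne (Finset.eq_univ_of_forall h)
    have hx0 : x ≠ 0 := fun h => hx (h ▸ h0mem)
    have hm : 1 ≤ m := by
      by_contra hm
      have : m = 0 := by omega
      subst this
      exact hx0 (Subsingleton.elim x 0)
    -- construct φ with kernel {0, x}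
    set V : Submodule (ZMod 2) (Fin m → ZMod 2) := Submodule.span (ZMod 2) {x} with hV
    have hVset : (V : Set (Fin m → ZMod 2)) = {0, x} := by
      ext y
      simp only [hV, SetLike.mem_coe, Submodule.mem_span_singleton]
      constructor
      · rintro ⟨c, rfl⟩
        have hc : c = 0 ∨ c = 1 := by revert c; decide
        rcases hc with rfl | rfl <;> simp
      · rintro (rfl | rfl)
        · exact ⟨0, by simp⟩
        · exact ⟨1, by simp⟩
    have hfr : Module.finrank (ZMod 2) ((Fin m → ZMod 2) ⧸ V) = m - 1 := by
      have h1 : Module.finrank (ZMod 2) V = 1 := finrank_span_singleton hx0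
      have h2 := Submodule.finrank_quotient_add_finrank V
      rw [h1, Module.finrank_fin_fun] at h2
      omega
    obtain ⟨e⟩ : Nonempty (((Fin m → ZMod 2) ⧸ V) ≃ₗ[ZMod 2] (Fin (m - 1) → ZMod 2)) := by
      apply FiniteDimensional.nonempty_linearEquiv_of_finrank_eq
      rw [hfr, Module.finrank_fin_fun]
    set φ : (Fin m → ZMod 2) →ₗ[ZMod 2] (Fin (m - 1) → ZMod 2) := e.toLinearMap ∘ₗ V.mkQ with hφ
    have hkerφ : (LinearMap.ker φ : Set (Fin m → ZMod 2)) = {0, x} := by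
      rw [← hVset]
      ext y
      simp only [SetLike.mem_coe, LinearMap.mem_ker, hφ, LinearMap.coe_comp,
        Function.comp_apply, LinearEquiv.coe_coe]
      rw [e.map_eq_zero_iff, ← Submodule.Quotient.mk_eq_zero V]
      rfl
    exact hmin (m - 1) (by omega) ⟨φ '' A, φ, part1 x hx φ hkerφ⟩
  refine ⟨part1, part2, ?_⟩
  -- Part 3
  intro hlt
  have hAcard : (0 : ℝ) < A.card := by
    have := Finset.card_pos.2 ⟨a₀, ha₀⟩
    exact_mod_cast this
  have hplu := Finset.pluennecke_ruzsa_inequality_nsmul_sub_nsmul_add ⟨a₀, ha₀⟩ A 2 2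
  have hset : (2 • A - 2 • A : Finset (Fin m → ZMod 2)) = A + A - A - A := by
    rw [two_nsmul, sub_sub]
  rw [hset, part2] at hplu
  have hcarduniv : (Finset.univ : Finset (Fin m → ZMod 2)).card = 2 ^ m := by
    simp [Finset.card_univ]
  have hplu' : ((2 : ℝ) ^ m : ℝ) ≤ (((A + A).card : ℝ) / A.card) ^ 4 * A.card := by
    have := hplu
    rw [hcarduniv] at this
    have h2 : ((2 ^ m : ℕ) : ℚ≥0) ≤ (((A + A).card : ℚ≥0) / A.card) ^ (2 + 2) * A.card := this
    have h3 := (NNRat.cast_le (K := ℝ)).2 h2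
    push_cast at h3
    norm_num at h3 ⊢
    exact h3
  have hKpos : (0 : ℝ) ≤ K := by
    have h1 : (0 : ℝ) < (A + A).card := by
      have : (A + A).Nonempty := ⟨a₀ + a₀, Finset.add_mem_add ha₀ ha₀⟩
      exact_mod_cast Finset.card_pos.2 this
    nlinarith
  have hdiv : ((A + A).card : ℝ) / A.card ≤ K := by
    rw [div_le_iff₀ hAcard]
    exact hK
  have hfinal : (((A + A).card : ℝ) / A.card) ^ 4 * A.card ≤ K ^ 4 * A.card := by
    have hnn : (0 : ℝ) ≤ ((A + A).card : ℝ) / A.card := by positivity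
    gcongr
  linarith
end
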